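/- arXiv:2406.02186 — 14 statements merged into one kernel-verified Lean document; each statement's English description precedes it below -/
import Mathlib

section
/- Fix real parameters a₁, a₂ ∈ (0,1], b₁, b₂ ∈ (0,1), and λ₁, λ₂ > 0, and set u_i = b_iλ_i/a_i. If √u₁ + √u₂ < 1, then the equation c = ∏_{i=1}^{2} a_i c/(a_i c + b_i λ_i) has exactly two solutions in (0, ∞), namely c_L = ((1 − u₁ − u₂) + √D)/2 and c_S = ((1 − u₁ − u₂) − √D)/2 where D = (1 − u₁ − u₂)² − 4u₁u₂, and these satisfy 0 < c_S < c_L. If √u₁ + √u₂ > 1, the equation has no solution in (0, ∞). -/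
open Real

/-- The product map `F(c) = ∏_{i=1,2} aᵢ c / (aᵢ c + bᵢ λᵢ)` from the two
transmitter–receiver pair fixed-point equation. -/
noncomputable def twoPairF (a₁ a₂ b₁ b₂ l₁ l₂ c : ℝ) : ℝ :=
  (a₁ * c / (a₁ * c + b₁ * l₁)) * (a₂ * c / (a₂ * c + b₂ * l₂))

/-- Discriminant `D = (1 − u₁ − u₂)² − 4 u₁ u₂` with `uᵢ = bᵢ λᵢ / aᵢ`. -/
noncomputable def twoPairD (a₁ a₂ b₁ b₂ l₁ l₂ : ℝ) : ℝ :=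
  (1 - b₁ * l₁ / a₁ - b₂ * l₂ / a₂) ^ 2 - 4 * (b₁ * l₁ / a₁) * (b₂ * l₂ / a₂)

/-- Larger root `c_L = ((1 − u₁ − u₂) + √D)/2`. -/
noncomputable def twoPairCL (a₁ a₂ b₁ b₂ l₁ l₂ : ℝ) : ℝ :=
  ((1 - b₁ * l₁ / a₁ - b₂ * l₂ / a₂) + Real.sqrt (twoPairD a₁ a₂ b₁ b₂ l₁ l₂)) / 2

/-- Smaller root `c_S = ((1 − u₁ − u₂) − √D)/2`. -/
noncomputable def twoPairCS (a₁ a₂ b₁ b₂ l₁ l₂ : ℝ) : ℝ :=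
  ((1 - b₁ * l₁ / a₁ - b₂ * l₂ / a₂) - Real.sqrt (twoPairD a₁ a₂ b₁ b₂ l₁ l₂)) / 2

set_option maxHeartbeats 2000000 in
/-- If `√u₁ + √u₂ < 1` the equation `c = ∏_i aᵢ c/(aᵢ c + bᵢ λᵢ)` has exactly the two
positive solutions `c_L` and `c_S`, with `0 < c_S < c_L`; if `√u₁ + √u₂ > 1` it has
no positive solution. -/
theorem twoPair_fixedPoints (a₁ a₂ b₁ b₂ l₁ l₂ : ℝ)
    (ha₁ : 0 < a₁) (ha₁' : a₁ ≤ 1) (ha₂ : 0 < a₂) (ha₂' : a₂ ≤ 1)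
    (hb₁ : 0 < b₁) (hb₁' : b₁ < 1) (hb₂ : 0 < b₂) (hb₂' : b₂ < 1)
    (hl₁ : 0 < l₁) (hl₂ : 0 < l₂) :
    (Real.sqrt (b₁ * l₁ / a₁) + Real.sqrt (b₂ * l₂ / a₂) < 1 →
      0 < twoPairCS a₁ a₂ b₁ b₂ l₁ l₂ ∧
      twoPairCS a₁ a₂ b₁ b₂ l₁ l₂ < twoPairCL a₁ a₂ b₁ b₂ l₁ l₂ ∧
      twoPairCL a₁ a₂ b₁ b₂ l₁ l₂
        = twoPairF a₁ a₂ b₁ b₂ l₁ l₂ (twoPairCL a₁ a₂ b₁ b₂ l₁ l₂) ∧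
      twoPairCS a₁ a₂ b₁ b₂ l₁ l₂
        = twoPairF a₁ a₂ b₁ b₂ l₁ l₂ (twoPairCS a₁ a₂ b₁ b₂ l₁ l₂) ∧
      ∀ c : ℝ, 0 < c → c = twoPairF a₁ a₂ b₁ b₂ l₁ l₂ c →
        c = twoPairCL a₁ a₂ b₁ b₂ l₁ l₂ ∨ c = twoPairCS a₁ a₂ b₁ b₂ l₁ l₂) ∧
    (1 < Real.sqrt (b₁ * l₁ / a₁) + Real.sqrt (b₂ * l₂ / a₂) →
      ¬ ∃ c : ℝ, 0 < c ∧ c = twoPairF a₁ a₂ b₁ b₂ l₁ l₂ c) := by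
  have hu₁ : 0 < b₁ * l₁ / a₁ := by positivity
  have hu₂ : 0 < b₂ * l₂ / a₂ := by positivity
  set u₁ := b₁ * l₁ / a₁ with hu₁def
  set u₂ := b₂ * l₂ / a₂ with hu₂def
  set s₁ := Real.sqrt u₁ with hs₁def
  set s₂ := Real.sqrt u₂ with hs₂def
  have hs₁ : s₁ ^ 2 = u₁ := Real.sq_sqrt hu₁.le
  have hs₂ : s₂ ^ 2 = u₂ := Real.sq_sqrt hu₂.le
  have hs₁pos : 0 < s₁ := Real.sqrt_pos.mpr hu₁
  have hs₂pos : 0 < s₂ := Real.sqrt_pos.mpr hu₂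
  set D := twoPairD a₁ a₂ b₁ b₂ l₁ l₂ with hDdef
  have hD : D = (1 - u₁ - u₂) ^ 2 - 4 * u₁ * u₂ := rfl
  have hCS : twoPairCS a₁ a₂ b₁ b₂ l₁ l₂ = ((1 - u₁ - u₂) - Real.sqrt D) / 2 := rfl
  have hCL : twoPairCL a₁ a₂ b₁ b₂ l₁ l₂ = ((1 - u₁ - u₂) + Real.sqrt D) / 2 := rfl
  clear_value s₁ s₂
  -- key equivalence: for c > 0, c = F c ↔ (c+u₁)(c+u₂) = c
  have key : ∀ c : ℝ, 0 < c →
      (c = twoPairF a₁ a₂ b₁ b₂ l₁ l₂ c ↔ (c + u₁) * (c + u₂) = c) := by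
    intro c hc
    have h1 : (0:ℝ) < a₁ * c + b₁ * l₁ := by positivity
    have h2 : (0:ℝ) < a₂ * c + b₂ * l₂ := by positivity
    have ha₁0 : a₁ ≠ 0 := ha₁.ne'
    have ha₂0 : a₂ ≠ 0 := ha₂.ne'
    unfold twoPairF
    rw [div_mul_div_comm, eq_div_iff (by positivity)]
    constructor
    · intro h
      have hc0 : c ≠ 0 := hc.ne'
      rw [hu₁def, hu₂def]
      field_simp
      nlinarith [h, mul_pos ha₁ ha₂, mul_pos hc hc]
    · intro h
      have : a₁ * (c + u₁) = a₁ * c + b₁ * l₁ := by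
        rw [hu₁def]; field_simp
      have h2' : a₂ * (c + u₂) = a₂ * c + b₂ * l₂ := by
        rw [hu₂def]; field_simp
      calc c * ((a₁ * c + b₁ * l₁) * (a₂ * c + b₂ * l₂))
          = c * ((a₁ * (c + u₁)) * (a₂ * (c + u₂))) := by rw [this, h2']
        _ = (a₁ * a₂) * (c * ((c + u₁) * (c + u₂))) := by ring
        _ = (a₁ * a₂) * (c * c) := by rw [h]
        _ = a₁ * c * (a₂ * c) := by ring
  clear_value u₁ u₂ D
  clear hu₁def hu₂def hDdef
  constructor
  · intro hlt
    have hs : s₁ + s₂ < 1 := hlt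
    have hT : 2 * (s₁ * s₂) < 1 - u₁ - u₂ := by nlinarith [sq_nonneg (s₁ + s₂)]
    have hTpos : 0 < 1 - u₁ - u₂ := by nlinarith [mul_pos hs₁pos hs₂pos]
    have hfact : D = (1 - (s₁ + s₂) ^ 2) * (1 - (s₁ - s₂) ^ 2) := by
      rw [hD, ← hs₁, ← hs₂]; ring
    have hf1 : 0 < 1 - (s₁ + s₂) ^ 2 := by nlinarith [hs₁pos, hs₂pos]
    have hf2 : 0 < 1 - (s₁ - s₂) ^ 2 := by nlinarith [mul_pos hs₁pos hs₂pos]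
    have hDpos : 0 < D := by rw [hfact]; exact mul_pos hf1 hf2
    have hsD : Real.sqrt D ^ 2 = D := Real.sq_sqrt hDpos.le
    have hsDpos : 0 < Real.sqrt D := Real.sqrt_pos.mpr hDpos
    have hsDlt : Real.sqrt D < 1 - u₁ - u₂ := by
      rw [show Real.sqrt D < 1 - u₁ - u₂ ↔ D < (1 - u₁ - u₂) ^ 2 from Real.sqrt_lt' hTpos]
      rw [hD]; nlinarith [mul_pos hu₁ hu₂]
    have hCSpos : 0 < twoPairCS a₁ a₂ b₁ b₂ l₁ l₂ := by rw [hCS]; linarith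
    have hCLpos : 0 < twoPairCL a₁ a₂ b₁ b₂ l₁ l₂ := by rw [hCL]; linarith
    have hlt' : twoPairCS a₁ a₂ b₁ b₂ l₁ l₂ < twoPairCL a₁ a₂ b₁ b₂ l₁ l₂ := by
      rw [hCS, hCL]; linarith
    have hfixL : twoPairCL a₁ a₂ b₁ b₂ l₁ l₂
        = twoPairF a₁ a₂ b₁ b₂ l₁ l₂ (twoPairCL a₁ a₂ b₁ b₂ l₁ l₂) := by
      rw [key _ hCLpos, hCL]
      linear_combination (1/4 : ℝ) * hsD + (1/4 : ℝ) * hD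
    have hfixS : twoPairCS a₁ a₂ b₁ b₂ l₁ l₂
        = twoPairF a₁ a₂ b₁ b₂ l₁ l₂ (twoPairCS a₁ a₂ b₁ b₂ l₁ l₂) := by
      rw [key _ hCSpos, hCS]
      linear_combination (1/4 : ℝ) * hsD + (1/4 : ℝ) * hD
    refine ⟨hCSpos, hlt', hfixL, hfixS, ?_⟩
    intro c hc hfix
    have hq : (c + u₁) * (c + u₂) = c := (key c hc).mp hfix
    -- c² - (1-u₁-u₂) c + u₁ u₂ = 0, factor
    have hfac : (c - twoPairCL a₁ a₂ b₁ b₂ l₁ l₂) * (c - twoPairCS a₁ a₂ b₁ b₂ l₁ l₂) = 0 := by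
      rw [hCL, hCS]
      linear_combination hq - (1/4 : ℝ) * hsD - (1/4 : ℝ) * hD
    rcases mul_eq_zero.mp hfac with h | h
    · left; linarith [sub_eq_zero.mp h]
    · right; linarith [sub_eq_zero.mp h]
  · intro hgt
    rintro ⟨c, hc, hfix⟩
    have hq : (c + u₁) * (c + u₂) = c := (key c hc).mp hfix
    -- 1 - u₁ - u₂ = c + u₁u₂/c ≥ 2 s₁ s₂
    have h1 : c ^ 2 + u₁ * u₂ - (1 - u₁ - u₂) * c = 0 := by linear_combination hq
    have h2 : 2 * (s₁ * s₂) * c ≤ c ^ 2 + u₁ * u₂ := by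
      nlinarith [sq_nonneg (c - s₁ * s₂), hs₁, hs₂]
    have h3 : 2 * (s₁ * s₂) ≤ 1 - u₁ - u₂ := by
      have := h1
      nlinarith [h2, hc]
    have : (s₁ + s₂) ^ 2 ≤ 1 := by nlinarith
    have hle : s₁ + s₂ ≤ 1 := by nlinarith [hs₁pos, hs₂pos]
    linarith [hgt, hle]
end

section
/- Fix real parameters a₁, a₂ ∈ (0,1], b₁, b₂ ∈ (0,1), λ₁, λ₂ > 0, set u_i = b_iλ_i/a_i, and assume √u₁ + √u₂ < 1. Then the pair (p_{1,L}, p_{2,L}) with p_{i,L} = a_i c_L + b_i λ_i, and the pair (p_{1,S}, p_{2,S}) with p_{i,S} = a_i c_S + b_i λ_i, each have strictly positive coordinates and each satisfy the system of equations p₁ = a₁(1 − b₂λ₂/p₂) and p₂ = a₂(1 − b₁λ₁/p₁). -/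
open Real

/-- The pairs `p_{i,L} = aᵢ c_L + bᵢ λᵢ` and `p_{i,S} = aᵢ c_S + bᵢ λᵢ` have positive
coordinates and both solve the all-unsaturated fixed-point system
`p₁ = a₁(1 − b₂λ₂/p₂)`, `p₂ = a₂(1 − b₁λ₁/p₁)`. -/
theorem twoPair_steadyStates_solve_system (a₁ a₂ b₁ b₂ l₁ l₂ : ℝ)
    (ha₁ : 0 < a₁) (ha₁' : a₁ ≤ 1) (ha₂ : 0 < a₂) (ha₂' : a₂ ≤ 1)
    (hb₁ : 0 < b₁) (hb₁' : b₁ < 1) (hb₂ : 0 < b₂) (hb₂' : b₂ < 1)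
    (hl₁ : 0 < l₁) (hl₂ : 0 < l₂)
    (hcond : Real.sqrt (b₁ * l₁ / a₁) + Real.sqrt (b₂ * l₂ / a₂) < 1) :
    let p₁L := a₁ * twoPairCL a₁ a₂ b₁ b₂ l₁ l₂ + b₁ * l₁
    let p₂L := a₂ * twoPairCL a₁ a₂ b₁ b₂ l₁ l₂ + b₂ * l₂
    let p₁S := a₁ * twoPairCS a₁ a₂ b₁ b₂ l₁ l₂ + b₁ * l₁
    let p₂S := a₂ * twoPairCS a₁ a₂ b₁ b₂ l₁ l₂ + b₂ * l₂
    (0 < p₁L ∧ 0 < p₂L ∧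
      p₁L = a₁ * (1 - b₂ * l₂ / p₂L) ∧ p₂L = a₂ * (1 - b₁ * l₁ / p₁L)) ∧
    (0 < p₁S ∧ 0 < p₂S ∧
      p₁S = a₁ * (1 - b₂ * l₂ / p₂S) ∧ p₂S = a₂ * (1 - b₁ * l₁ / p₁S)) := by
  intro p₁L p₂L p₁S p₂S
  have ha₁0 : a₁ ≠ 0 := ha₁.ne'
  have ha₂0 : a₂ ≠ 0 := ha₂.ne'
  set u₁ := b₁ * l₁ / a₁ with hu₁def
  set u₂ := b₂ * l₂ / a₂ with hu₂def
  have hu₁pos : 0 < u₁ := div_pos (mul_pos hb₁ hl₁) ha₁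
  have hu₂pos : 0 < u₂ := div_pos (mul_pos hb₂ hl₂) ha₂
  have hbl₁ : b₁ * l₁ = a₁ * u₁ := by rw [hu₁def]; field_simp
  have hbl₂ : b₂ * l₂ = a₂ * u₂ := by rw [hu₂def]; field_simp
  set x := Real.sqrt u₁ with hxdef
  set y := Real.sqrt u₂ with hydef
  have hx0 : 0 < x := Real.sqrt_pos.mpr hu₁pos
  have hy0 : 0 < y := Real.sqrt_pos.mpr hu₂pos
  have hx2 : x ^ 2 = u₁ := Real.sq_sqrt hu₁pos.le
  have hy2 : y ^ 2 = u₂ := Real.sq_sqrt hu₂pos.le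
  have hD : twoPairD a₁ a₂ b₁ b₂ l₁ l₂ = (1 - u₁ - u₂) ^ 2 - 4 * u₁ * u₂ := rfl
  have hDpos : 0 < twoPairD a₁ a₂ b₁ b₂ l₁ l₂ := by
    rw [hD, ← hx2, ← hy2]
    have h1 : 0 < 1 - (x + y) ^ 2 := by nlinarith
    have h2 : 0 < 1 - (x - y) ^ 2 := by nlinarith
    nlinarith [mul_pos h1 h2]
  have ht : 0 < 1 - u₁ - u₂ := by
    rw [← hx2, ← hy2]; nlinarith [mul_pos hx0 hy0]
  set s := Real.sqrt (twoPairD a₁ a₂ b₁ b₂ l₁ l₂) with hsdef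
  have hs2 : s ^ 2 = (1 - u₁ - u₂) ^ 2 - 4 * u₁ * u₂ := by
    rw [hsdef, Real.sq_sqrt hDpos.le, hD]
  have hs0 : 0 < s := Real.sqrt_pos.mpr hDpos
  have hst : s < 1 - u₁ - u₂ := by
    nlinarith [mul_pos hu₁pos hu₂pos]
  have hcL : twoPairCL a₁ a₂ b₁ b₂ l₁ l₂ = ((1 - u₁ - u₂) + s) / 2 := rfl
  have hcS : twoPairCS a₁ a₂ b₁ b₂ l₁ l₂ = ((1 - u₁ - u₂) - s) / 2 := rfl
  clear_value u₁ u₂ x y s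
  clear hu₁def hu₂def hxdef hydef hsdef hD hDpos hcond hx2 hy2 hx0 hy0
  have main : ∀ c : ℝ, 0 < c → c ^ 2 - (1 - u₁ - u₂) * c + u₁ * u₂ = 0 →
      0 < a₁ * c + b₁ * l₁ ∧ 0 < a₂ * c + b₂ * l₂ ∧
      a₁ * c + b₁ * l₁ = a₁ * (1 - b₂ * l₂ / (a₂ * c + b₂ * l₂)) ∧
      a₂ * c + b₂ * l₂ = a₂ * (1 - b₁ * l₁ / (a₁ * c + b₁ * l₁)) := by
    intro c hc hq
    have hp₁ : 0 < a₁ * c + b₁ * l₁ := add_pos (mul_pos ha₁ hc) (mul_pos hb₁ hl₁)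
    have hp₂ : 0 < a₂ * c + b₂ * l₂ := add_pos (mul_pos ha₂ hc) (mul_pos hb₂ hl₂)
    refine ⟨hp₁, hp₂, ?_, ?_⟩
    · have hkey : (a₁ * c + b₁ * l₁) * (a₂ * c + b₂ * l₂)
          = a₁ * ((a₂ * c + b₂ * l₂) - b₂ * l₂) := by
        rw [hbl₁, hbl₂]; linear_combination a₁ * a₂ * hq
      rw [one_sub_div hp₂.ne', ← mul_div_assoc, eq_div_iff hp₂.ne']
      exact hkey
    · have hkey : (a₂ * c + b₂ * l₂) * (a₁ * c + b₁ * l₁)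
          = a₂ * ((a₁ * c + b₁ * l₁) - b₁ * l₁) := by
        rw [hbl₁, hbl₂]; linear_combination a₁ * a₂ * hq
      rw [one_sub_div hp₁.ne', ← mul_div_assoc, eq_div_iff hp₁.ne']
      exact hkey
  have hcLpos : 0 < ((1 - u₁ - u₂) + s) / 2 := by linarith
  have hcSpos : 0 < ((1 - u₁ - u₂) - s) / 2 := by linarith
  have hqL : (((1 - u₁ - u₂) + s) / 2) ^ 2
      - (1 - u₁ - u₂) * (((1 - u₁ - u₂) + s) / 2) + u₁ * u₂ = 0 := by
    linear_combination hs2 / 4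
  have hqS : (((1 - u₁ - u₂) - s) / 2) ^ 2
      - (1 - u₁ - u₂) * (((1 - u₁ - u₂) - s) / 2) + u₁ * u₂ = 0 := by
    linear_combination hs2 / 4
  obtain ⟨h1L, h2L, h3L, h4L⟩ := main _ hcLpos hqL
  obtain ⟨h1S, h2S, h3S, h4S⟩ := main _ hcSpos hqS
  rw [← hcL] at h1L h2L h3L h4L
  rw [← hcS] at h1S h2S h3S h4S
  exact ⟨⟨h1L, h2L, h3L, h4L⟩, ⟨h1S, h2S, h3S, h4S⟩⟩
end

section
/- Fix real parameters a₁, a₂ ∈ (0,1], b₁, b₂ ∈ (0,1), λ₁, λ₂ > 0, set u_i = b_iλ_i/a_i, assume √u₁ + √u₂ < 1, and define F : (0,∞) → ℝ by F(c) = ∏_{i=1}^{2} a_i c/(a_i c + b_i λ_i). Then the derivative of F satisfies 0 < F′(c_L) < 1 and F′(c_S) > 1, where c_L and c_S are the two fixed points of F in (0,∞). -/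
set_option maxHeartbeats 1000000

open Real

/-- Derivative of `c ↦ c/(c+u₁) · c/(c+u₂)` at a fixed point. -/
lemma twoPair_deriv_helper (u₁ u₂ c : ℝ) (hu₁ : 0 < u₁) (hu₂ : 0 < u₂) (hc : 0 < c)
    (hfix : c ^ 2 = (1 - u₁ - u₂) * c - u₁ * u₂) :
    deriv (fun x : ℝ => x / (x + u₁) * (x / (x + u₂))) c = 2 - (u₁ + u₂) - 2 * c := by
  have hA : c + u₁ ≠ 0 := by positivity
  have hB : c + u₂ ≠ 0 := by positivity
  have h1 : HasDerivAt (fun x : ℝ => x / (x + u₁))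
      ((1 * (c + u₁) - c * 1) / (c + u₁) ^ 2) c :=
    (hasDerivAt_id c).div ((hasDerivAt_id c).add_const u₁) hA
  have h2 : HasDerivAt (fun x : ℝ => x / (x + u₂))
      ((1 * (c + u₂) - c * 1) / (c + u₂) ^ 2) c :=
    (hasDerivAt_id c).div ((hasDerivAt_id c).add_const u₂) hB
  have h := (h1.mul h2).deriv
  rw [show (fun x : ℝ => x / (x + u₁) * (x / (x + u₂))) = (fun x : ℝ => x / (x + u₁)) * (fun x : ℝ => x / (x + u₂)) from rfl, h]
  have hAB : (c + u₁) * (c + u₂) = c := by nlinarith [hfix]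
  have hc2 : (c : ℝ) ^ 2 ≠ 0 := by positivity
  have e1 : (1 * (c + u₁) - c * 1) / (c + u₁) ^ 2 * (c / (c + u₂)) +
      c / (c + u₁) * ((1 * (c + u₂) - c * 1) / (c + u₂) ^ 2) =
      (u₁ * (c + u₂) + u₂ * (c + u₁)) * c / ((c + u₁) * (c + u₂)) ^ 2 := by
    field_simp
    ring
  rw [e1, hAB, div_eq_iff hc2]
  linear_combination (2 * c) * hfix

/-- `c_L` is attracting (`0 < F′(c_L) < 1`) and `c_S` is repelling (`F′(c_S) > 1`). -/
theorem twoPair_deriv_at_fixedPoints (a₁ a₂ b₁ b₂ l₁ l₂ : ℝ)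
    (ha₁ : 0 < a₁) (ha₁' : a₁ ≤ 1) (ha₂ : 0 < a₂) (ha₂' : a₂ ≤ 1)
    (hb₁ : 0 < b₁) (hb₁' : b₁ < 1) (hb₂ : 0 < b₂) (hb₂' : b₂ < 1)
    (hl₁ : 0 < l₁) (hl₂ : 0 < l₂)
    (hcond : Real.sqrt (b₁ * l₁ / a₁) + Real.sqrt (b₂ * l₂ / a₂) < 1) :
    (0 < deriv (twoPairF a₁ a₂ b₁ b₂ l₁ l₂) (twoPairCL a₁ a₂ b₁ b₂ l₁ l₂) ∧
      deriv (twoPairF a₁ a₂ b₁ b₂ l₁ l₂) (twoPairCL a₁ a₂ b₁ b₂ l₁ l₂) < 1) ∧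
    1 < deriv (twoPairF a₁ a₂ b₁ b₂ l₁ l₂) (twoPairCS a₁ a₂ b₁ b₂ l₁ l₂) := by
  have hu₁ : (0 : ℝ) < b₁ * l₁ / a₁ := by positivity
  have hu₂ : (0 : ℝ) < b₂ * l₂ / a₂ := by positivity
  set u₁ := b₁ * l₁ / a₁ with hu₁d
  set u₂ := b₂ * l₂ / a₂ with hu₂d
  -- rewrite F
  have hF : twoPairF a₁ a₂ b₁ b₂ l₁ l₂ = fun x : ℝ => x / (x + u₁) * (x / (x + u₂)) := by
    funext x
    have h1 : a₁ * x + b₁ * l₁ = a₁ * (x + u₁) := by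
      rw [hu₁d]; field_simp
    have h2 : a₂ * x + b₂ * l₂ = a₂ * (x + u₂) := by
      rw [hu₂d]; field_simp
    simp only [twoPairF, h1, h2, mul_div_mul_left _ _ ha₁.ne', mul_div_mul_left _ _ ha₂.ne']
  -- sqrt facts
  have hnn₁ : 0 ≤ Real.sqrt u₁ := Real.sqrt_nonneg _
  have hnn₂ : 0 ≤ Real.sqrt u₂ := Real.sqrt_nonneg _
  have hs₁ : Real.sqrt u₁ ^ 2 = u₁ := Real.sq_sqrt hu₁.le
  have hs₂ : Real.sqrt u₂ ^ 2 = u₂ := Real.sq_sqrt hu₂.le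
  have hs : u₁ + u₂ < 1 := by
    nlinarith [hcond, hs₁, hs₂, mul_nonneg hnn₁ hnn₂, add_nonneg hnn₁ hnn₂]
  have hDeq : twoPairD a₁ a₂ b₁ b₂ l₁ l₂ = (1 - u₁ - u₂) ^ 2 - 4 * u₁ * u₂ := by
    unfold twoPairD
    rw [hu₁d, hu₂d]
  have f1 : 0 < 1 - (Real.sqrt u₁ + Real.sqrt u₂) ^ 2 := by
    nlinarith [add_nonneg hnn₁ hnn₂, hcond]
  have f2 : 0 < 1 - (Real.sqrt u₁ - Real.sqrt u₂) ^ 2 := by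
    nlinarith [mul_nonneg hnn₁ hnn₂, f1]
  have hDpos : 0 < (1 - u₁ - u₂) ^ 2 - 4 * u₁ * u₂ := by
    nlinarith [mul_pos f1 f2, hs₁, hs₂]
  set d := Real.sqrt (twoPairD a₁ a₂ b₁ b₂ l₁ l₂) with hdd
  have hDpos' : 0 < twoPairD a₁ a₂ b₁ b₂ l₁ l₂ := by rw [hDeq]; exact hDpos
  have hd0 : 0 < d := Real.sqrt_pos.mpr hDpos'
  have hd2 : d ^ 2 = (1 - u₁ - u₂) ^ 2 - 4 * u₁ * u₂ := by
    rw [hdd, Real.sq_sqrt hDpos'.le, hDeq]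
  have hdlt : d < 1 - (u₁ + u₂) := by
    nlinarith [hd0, hd2, mul_pos hu₁ hu₂, hs]
  have hcLd : twoPairCL a₁ a₂ b₁ b₂ l₁ l₂ = ((1 - u₁ - u₂) + d) / 2 := by
    unfold twoPairCL
    rw [hu₁d, hu₂d, hdd]
  have hcSd : twoPairCS a₁ a₂ b₁ b₂ l₁ l₂ = ((1 - u₁ - u₂) - d) / 2 := by
    unfold twoPairCS
    rw [hu₁d, hu₂d, hdd]
  have hcSpos : 0 < ((1 - u₁ - u₂) - d) / 2 := by linarith
  have hcLpos : 0 < ((1 - u₁ - u₂) + d) / 2 := by linarith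
  have hqL : (((1 - u₁ - u₂) + d) / 2) ^ 2 =
      (1 - u₁ - u₂) * (((1 - u₁ - u₂) + d) / 2) - u₁ * u₂ := by
    linear_combination hd2 / 4
  have hqS : (((1 - u₁ - u₂) - d) / 2) ^ 2 =
      (1 - u₁ - u₂) * (((1 - u₁ - u₂) - d) / 2) - u₁ * u₂ := by
    linear_combination hd2 / 4
  rw [hF, hcLd, hcSd,
    twoPair_deriv_helper u₁ u₂ _ hu₁ hu₂ hcLpos hqL,
    twoPair_deriv_helper u₁ u₂ _ hu₁ hu₂ hcSpos hqS]
  refine ⟨⟨?_, ?_⟩, ?_⟩ <;> nlinarith [hd0, hdlt, hu₁, hu₂]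
end

section
/- Fix real parameters a₁, a₂ ∈ (0,1], b₁, b₂ ∈ (0,1), λ₁, λ₂ > 0, set u_i = b_iλ_i/a_i, assume √u₁ + √u₂ < 1, and define F : (0,∞) → ℝ by F(c) = ∏_{i=1}^{2} a_i c/(a_i c + b_i λ_i). Then F(c) < c for all c ∈ (0, c_S); F(c) > c for all c ∈ (c_S, c_L); and F(c) < c for all c ∈ (c_L, ∞). -/
open Real

set_option maxHeartbeats 1000000 in
/-- Sign of `F(c) − c` on the three intervals cut out by the two positive fixed
points `c_S < c_L`: `F(c) < c` on `(0, c_S)`, `F(c) > c` on `(c_S, c_L)`, and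
`F(c) < c` on `(c_L, ∞)`. -/
theorem twoPairF_sign (a₁ a₂ b₁ b₂ l₁ l₂ : ℝ)
    (ha₁ : 0 < a₁) (ha₁' : a₁ ≤ 1) (ha₂ : 0 < a₂) (ha₂' : a₂ ≤ 1)
    (hb₁ : 0 < b₁) (hb₁' : b₁ < 1) (hb₂ : 0 < b₂) (hb₂' : b₂ < 1)
    (hl₁ : 0 < l₁) (hl₂ : 0 < l₂)
    (hcond : Real.sqrt (b₁ * l₁ / a₁) + Real.sqrt (b₂ * l₂ / a₂) < 1) :
    (∀ c ∈ Set.Ioo 0 (twoPairCS a₁ a₂ b₁ b₂ l₁ l₂),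
      twoPairF a₁ a₂ b₁ b₂ l₁ l₂ c < c) ∧
    (∀ c ∈ Set.Ioo (twoPairCS a₁ a₂ b₁ b₂ l₁ l₂) (twoPairCL a₁ a₂ b₁ b₂ l₁ l₂),
      c < twoPairF a₁ a₂ b₁ b₂ l₁ l₂ c) ∧
    (∀ c ∈ Set.Ioi (twoPairCL a₁ a₂ b₁ b₂ l₁ l₂),
      twoPairF a₁ a₂ b₁ b₂ l₁ l₂ c < c) := by
  have hu₁ : 0 < b₁ * l₁ / a₁ := by positivity
  have hu₂ : 0 < b₂ * l₂ / a₂ := by positivity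
  set u₁ := b₁ * l₁ / a₁ with hu₁def
  set u₂ := b₂ * l₂ / a₂ with hu₂def
  set s₁ := Real.sqrt u₁ with hs₁def
  set s₂ := Real.sqrt u₂ with hs₂def
  have hs₁ : s₁ ^ 2 = u₁ := Real.sq_sqrt hu₁.le
  have hs₂ : s₂ ^ 2 = u₂ := Real.sq_sqrt hu₂.le
  have hs₁0 : 0 < s₁ := Real.sqrt_pos.mpr hu₁
  have hs₂0 : 0 < s₂ := Real.sqrt_pos.mpr hu₂
  have hDeq : twoPairD a₁ a₂ b₁ b₂ l₁ l₂ = (1 - u₁ - u₂) ^ 2 - 4 * u₁ * u₂ := rfl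
  have hA : 0 < 1 - (s₁ + s₂) ^ 2 := by nlinarith [hs₁0, hs₂0, hcond]
  have hB : 0 < 1 - (s₁ - s₂) ^ 2 := by nlinarith [mul_pos hs₁0 hs₂0, hA]
  have hDpos : 0 < twoPairD a₁ a₂ b₁ b₂ l₁ l₂ := by
    rw [hDeq, ← hs₁, ← hs₂]
    nlinarith [mul_pos hA hB]
  have hsqD : Real.sqrt (twoPairD a₁ a₂ b₁ b₂ l₁ l₂) ^ 2 = twoPairD a₁ a₂ b₁ b₂ l₁ l₂ :=
    Real.sq_sqrt hDpos.le
  have hsqDpos : 0 < Real.sqrt (twoPairD a₁ a₂ b₁ b₂ l₁ l₂) := Real.sqrt_pos.mpr hDpos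
  have hSpos : 0 < 1 - u₁ - u₂ := by
    rw [← hs₁, ← hs₂]; nlinarith [mul_pos hs₁0 hs₂0]
  set cS := twoPairCS a₁ a₂ b₁ b₂ l₁ l₂ with hcSdef
  set cL := twoPairCL a₁ a₂ b₁ b₂ l₁ l₂ with hcLdef
  have hcS : cS = ((1 - u₁ - u₂) - Real.sqrt (twoPairD a₁ a₂ b₁ b₂ l₁ l₂)) / 2 := rfl
  have hcL : cL = ((1 - u₁ - u₂) + Real.sqrt (twoPairD a₁ a₂ b₁ b₂ l₁ l₂)) / 2 := rfl
  have hsum : cS + cL = 1 - u₁ - u₂ := by rw [hcS, hcL]; ring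
  have hprod : cS * cL = u₁ * u₂ := by
    rw [hcS, hcL]
    linear_combination (-(1:ℝ)/4) * hsqD + (-(1:ℝ)/4) * hDeq
  have hDlt : twoPairD a₁ a₂ b₁ b₂ l₁ l₂ < (1 - u₁ - u₂) ^ 2 := by
    rw [hDeq]
    have := mul_pos hu₁ hu₂
    linarith
  have hcSpos : 0 < cS := by
    rw [hcS]
    have hlt : Real.sqrt (twoPairD a₁ a₂ b₁ b₂ l₁ l₂) < 1 - u₁ - u₂ := by
      nlinarith [hsqD, hSpos, hDlt, Real.sqrt_nonneg (twoPairD a₁ a₂ b₁ b₂ l₁ l₂)]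
    linarith
  have hcScL : cS < cL := by rw [hcS, hcL]; linarith
  have hquad : ∀ c : ℝ, c * ((c + u₁) * (c + u₂)) - c ^ 2 = c * ((c - cS) * (c - cL)) := by
    intro c
    linear_combination (c ^ 2) * hsum - c * hprod
  have hF : ∀ c : ℝ, 0 < c →
      twoPairF a₁ a₂ b₁ b₂ l₁ l₂ c = c ^ 2 / ((c + u₁) * (c + u₂)) := by
    intro c hc
    have h1 : (0:ℝ) < c + u₁ := by linarith
    have h2 : (0:ℝ) < c + u₂ := by linarith
    have e₁ : a₁ * c + b₁ * l₁ = a₁ * (c + u₁) := by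
      rw [hu₁def]; field_simp
    have e₂ : a₂ * c + b₂ * l₂ = a₂ * (c + u₂) := by
      rw [hu₂def]; field_simp
    rw [twoPairF, e₁, e₂, mul_div_mul_left _ _ ha₁.ne', mul_div_mul_left _ _ ha₂.ne',
      div_mul_div_comm]
    congr 1
    ring
  have hden : ∀ c : ℝ, 0 < c → 0 < (c + u₁) * (c + u₂) := fun c hc =>
    mul_pos (by linarith) (by linarith)
  refine ⟨?_, ?_, ?_⟩
  · rintro c ⟨hc0, hcS'⟩
    rw [hF c hc0, div_lt_iff₀ (hden c hc0)]
    nlinarith [hquad c, mul_pos hc0 (mul_pos (sub_pos.mpr hcS') (sub_pos.mpr (hcS'.trans hcScL)))]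
  · rintro c ⟨hc1, hc2⟩
    have hc0 : 0 < c := lt_trans hcSpos hc1
    rw [hF c hc0, lt_div_iff₀ (hden c hc0)]
    nlinarith [hquad c, mul_pos hc0 (mul_pos (sub_pos.mpr hc1) (sub_pos.mpr hc2))]
  · intro c hc
    simp only [Set.mem_Ioi] at hc
    have hc0 : 0 < c := lt_trans (lt_trans hcSpos hcScL) hc
    rw [hF c hc0, div_lt_iff₀ (hden c hc0)]
    nlinarith [hquad c, mul_pos hc0 (mul_pos (sub_pos.mpr (hcScL.trans hc)) (sub_pos.mpr hc))]
end

section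
/- Fix real parameters a₁, a₂ ∈ (0,1], b₁, b₂ ∈ (0,1), λ₁, λ₂ > 0, set u_i = b_iλ_i/a_i, assume √u₁ + √u₂ < 1, and define F : (0,∞) → ℝ by F(c) = ∏_{i=1}^{2} a_i c/(a_i c + b_i λ_i). Let (c_t)_{t≥0} be the sequence defined by any c₀ ∈ (0,∞) and c_{t+1} = F(c_t). If c₀ > c_S, then c_t converges to c_L as t → ∞. If 0 < c₀ < c_S, then (c_t) is strictly decreasing, satisfies c_t < c_S for all t, and hence does not converge to c_L. -/
open Real

open Filter

noncomputable def auxG (u₁ u₂ c : ℝ) : ℝ := c ^ 2 / ((c + u₁) * (c + u₂))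
section Aux
variable {u₁ u₂ s L : ℝ}

lemma auxP_pos (hu₁ : 0 < u₁) (hu₂ : 0 < u₂) {c : ℝ} (hc : 0 < c) :
    0 < (c + u₁) * (c + u₂) := mul_pos (by linarith) (by linarith)

lemma key_c (hsum : u₁ + u₂ = 1 - s - L) (hprod : u₁ * u₂ = s * L) (c : ℝ) :
    c * ((c + u₁) * (c + u₂)) - c ^ 2 = c * (c - s) * (c - L) := by
  linear_combination c ^ 2 * hsum + c * hprod

lemma key_s (hsum : u₁ + u₂ = 1 - s - L) (hprod : u₁ * u₂ = s * L) (c : ℝ) :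
    s * ((c + u₁) * (c + u₂)) - c ^ 2 = (s - c) * ((1 - s) * c + s * L) := by
  linear_combination (s * c) * hsum + s * hprod

lemma key_L (hsum : u₁ + u₂ = 1 - s - L) (hprod : u₁ * u₂ = s * L) (c : ℝ) :
    L * ((c + u₁) * (c + u₂)) - c ^ 2 = (L - c) * ((1 - L) * c + s * L) := by
  linear_combination (L * c) * hsum + L * hprod

structure AuxHyp (u₁ u₂ s L : ℝ) : Prop where
  hu₁ : 0 < u₁
  hu₂ : 0 < u₂
  hs : 0 < s
  hsL : s < L
  hL1 : L < 1
  hsum : u₁ + u₂ = 1 - s - L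
  hprod : u₁ * u₂ = s * L

namespace AuxHyp
variable (H : AuxHyp u₁ u₂ s L)
include H

lemma auxG_pos {c : ℝ} (hc : 0 < c) : 0 < auxG u₁ u₂ c :=
  div_pos (by positivity) (auxP_pos H.hu₁ H.hu₂ hc)

-- c < s case
lemma G_lt_self {c : ℝ} (hc : 0 < c) (h : c < s) : auxG u₁ u₂ c < c := by
  rw [auxG, div_lt_iff₀ (auxP_pos H.hu₁ H.hu₂ hc)]
  nlinarith [key_c H.hsum H.hprod c, mul_pos (mul_pos hc (sub_pos.2 h))
    (sub_pos.2 (h.trans H.hsL))]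

lemma G_lt_s {c : ℝ} (hc : 0 < c) (h : c < s) : auxG u₁ u₂ c < s := by
  rw [auxG, div_lt_iff₀ (auxP_pos H.hu₁ H.hu₂ hc)]
  have h1 : 0 < (1 - s) * c + s * L := by nlinarith [H.hs, H.hsL, H.hL1]
  nlinarith [key_s H.hsum H.hprod c, mul_pos (sub_pos.2 h) h1]

-- c > s case
lemma s_lt_G {c : ℝ} (hc : 0 < c) (h : s < c) : s < auxG u₁ u₂ c := by
  rw [auxG, lt_div_iff₀ (auxP_pos H.hu₁ H.hu₂ hc)]
  have h1 : 0 < (1 - s) * c + s * L := by nlinarith [H.hs, H.hsL, H.hL1]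
  nlinarith [key_s H.hsum H.hprod c, mul_pos (sub_pos.2 h) h1]

lemma self_le_G {c : ℝ} (hc : 0 < c) (h1 : s ≤ c) (h2 : c ≤ L) :
    c ≤ auxG u₁ u₂ c := by
  rw [auxG, le_div_iff₀ (auxP_pos H.hu₁ H.hu₂ hc)]
  nlinarith [key_c H.hsum H.hprod c,
    mul_nonneg (mul_nonneg hc.le (sub_nonneg.2 h1)) (sub_nonneg.2 h2)]

lemma G_le_L {c : ℝ} (hc : 0 < c) (h2 : c ≤ L) : auxG u₁ u₂ c ≤ L := by
  rw [auxG, div_le_iff₀ (auxP_pos H.hu₁ H.hu₂ hc)]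
  have h1 : 0 < (1 - L) * c + s * L := by nlinarith [H.hs, H.hsL, H.hL1]
  nlinarith [key_L H.hsum H.hprod c, mul_nonneg (sub_nonneg.2 h2) h1.le]

lemma L_lt_G {c : ℝ} (hc : 0 < c) (h : L < c) : L < auxG u₁ u₂ c := by
  rw [auxG, lt_div_iff₀ (auxP_pos H.hu₁ H.hu₂ hc)]
  have h1 : 0 < (1 - L) * c + s * L := by nlinarith [H.hs, H.hsL, H.hL1]
  nlinarith [key_L H.hsum H.hprod c, mul_pos (sub_pos.2 h) h1]

lemma G_lt_self' {c : ℝ} (hc : 0 < c) (h : L < c) : auxG u₁ u₂ c < c := by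
  rw [auxG, div_lt_iff₀ (auxP_pos H.hu₁ H.hu₂ hc)]
  nlinarith [key_c H.hsum H.hprod c, mul_pos (mul_pos hc
    (sub_pos.2 (H.hsL.trans h))) (sub_pos.2 h)]

lemma fixed_eq_L {x : ℝ} (hx : s < x) (hfix : auxG u₁ u₂ x = x) : x = L := by
  have hx0 : 0 < x := H.hs.trans hx
  have hP := auxP_pos H.hu₁ H.hu₂ hx0
  rw [auxG, div_eq_iff hP.ne'] at hfix
  have h0 : (x - s) * (x - L) = 0 := by
    have := key_c H.hsum H.hprod x
    have hPx : (x + u₁) * (x + u₂) = x :=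
      mul_left_cancel₀ hx0.ne'
        (show x * ((x + u₁) * (x + u₂)) = x * x by nlinarith [hfix])
    nlinarith [key_c H.hsum H.hprod x, hPx, hfix]
  rcases mul_eq_zero.1 h0 with h | h
  · exact absurd h (by linarith)
  · linarith

/-- Convergence to `L` when starting above `s`. -/
lemma conv (c : ℕ → ℝ) (h0 : s < c 0)
    (hrec : ∀ t, c (t + 1) = auxG u₁ u₂ (c t)) :
    Tendsto c atTop (nhds L) := by
  -- fixed-point extraction from a limit
  have fixpt : ∀ x : ℝ, s < x → Tendsto c atTop (nhds x) → x = L := by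
    intro x hx htend
    have hx0 : 0 < x := H.hs.trans hx
    have hPx : (x + u₁) * (x + u₂) ≠ 0 := (auxP_pos H.hu₁ H.hu₂ hx0).ne'
    have hcont : ContinuousAt (auxG u₁ u₂) x := by
      unfold auxG
      exact ContinuousAt.div (by fun_prop) (by fun_prop) hPx
    have h1 : Tendsto (fun t => c (t + 1)) atTop (nhds x) :=
      htend.comp (tendsto_add_atTop_nat 1)
    have h2 : Tendsto (fun t => auxG u₁ u₂ (c t)) atTop (nhds (auxG u₁ u₂ x)) :=
      hcont.tendsto.comp htend
    have h3 : Tendsto (fun t => auxG u₁ u₂ (c t)) atTop (nhds x) := by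
      simpa only [hrec] using h1
    exact H.fixed_eq_L hx (tendsto_nhds_unique h2 h3)
  rcases le_or_gt (c 0) L with hcase | hcase
  · -- increasing case: s < c t ≤ L
    have hinv : ∀ t, s < c t ∧ c t ≤ L := by
      intro t
      induction t with
      | zero => exact ⟨h0, hcase⟩
      | succ n ih =>
        have hn0 : 0 < c n := H.hs.trans ih.1
        rw [hrec]
        exact ⟨H.s_lt_G hn0 ih.1, H.G_le_L hn0 ih.2⟩
    have hmono : Monotone c := monotone_nat_of_le_succ fun n => by
      rw [hrec]
      exact H.self_le_G (H.hs.trans (hinv n).1) (hinv n).1.le (hinv n).2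
    have hbdd : BddAbove (Set.range c) := ⟨L, by rintro _ ⟨t, rfl⟩; exact (hinv t).2⟩
    have htend := tendsto_atTop_ciSup hmono hbdd
    have hxge : s < ⨆ t, c t := h0.trans_le (le_ciSup hbdd 0)
    rw [← fixpt _ hxge htend]
    exact htend
  · -- decreasing case: L < c t
    have hinv : ∀ t, L < c t := by
      intro t
      induction t with
      | zero => exact hcase
      | succ n ih =>
        rw [hrec]
        exact H.L_lt_G (H.hs.trans (H.hsL.trans ih)) ih
    have hanti : Antitone c := antitone_nat_of_succ_le fun n => by
      rw [hrec]
      exact (H.G_lt_self' (H.hs.trans (H.hsL.trans (hinv n))) (hinv n)).le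
    have hbdd : BddBelow (Set.range c) := ⟨L, by rintro _ ⟨t, rfl⟩; exact (hinv t).le⟩
    have htend := tendsto_atTop_ciInf hanti hbdd
    have hxge : s < ⨅ t, c t := H.hsL.trans_le (le_ciInf fun t => (hinv t).le)
    rw [← fixpt _ hxge htend]
    exact htend

/-- Divergence when starting below `s`. -/
lemma div (c : ℕ → ℝ) (hc0 : 0 < c 0) (h0 : c 0 < s)
    (hrec : ∀ t, c (t + 1) = auxG u₁ u₂ (c t)) :
    StrictAnti c ∧ (∀ t, c t < s) ∧ ¬ Tendsto c atTop (nhds L) := by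
  have hinv : ∀ t, 0 < c t ∧ c t < s := by
    intro t
    induction t with
    | zero => exact ⟨hc0, h0⟩
    | succ n ih =>
      rw [hrec]
      exact ⟨H.auxG_pos ih.1, H.G_lt_s ih.1 ih.2⟩
  refine ⟨strictAnti_nat_of_succ_lt fun n => by
      rw [hrec]; exact H.G_lt_self (hinv n).1 (hinv n).2,
    fun t => (hinv t).2, ?_⟩
  intro htend
  have := (htend.eventually (eventually_gt_nhds H.hsL)).exists
  obtain ⟨t, ht⟩ := this
  exact absurd (hinv t).2 (not_lt.2 ht.le)

end AuxHyp
end Aux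

set_option maxHeartbeats 1000000 in
/-- Convergence dichotomy for the iteration `c_{t+1} = F(c_t)` (Lemma 1 of the paper):
if `c₀ > c_S` the iterates converge to the attracting fixed point `c_L`; if
`0 < c₀ < c_S` the iterates are strictly decreasing, stay below `c_S`, and hence
do not converge to `c_L`. -/
theorem twoPair_iteration_dichotomy (a₁ a₂ b₁ b₂ l₁ l₂ : ℝ)
    (ha₁ : 0 < a₁) (ha₁' : a₁ ≤ 1) (ha₂ : 0 < a₂) (ha₂' : a₂ ≤ 1)
    (hb₁ : 0 < b₁) (hb₁' : b₁ < 1) (hb₂ : 0 < b₂) (hb₂' : b₂ < 1)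
    (hl₁ : 0 < l₁) (hl₂ : 0 < l₂)
    (hcond : Real.sqrt (b₁ * l₁ / a₁) + Real.sqrt (b₂ * l₂ / a₂) < 1)
    (c : ℕ → ℝ) (hc0 : 0 < c 0)
    (hrec : ∀ t, c (t + 1) = twoPairF a₁ a₂ b₁ b₂ l₁ l₂ (c t)) :
    (twoPairCS a₁ a₂ b₁ b₂ l₁ l₂ < c 0 →
      Filter.Tendsto c Filter.atTop (nhds (twoPairCL a₁ a₂ b₁ b₂ l₁ l₂))) ∧
    (c 0 < twoPairCS a₁ a₂ b₁ b₂ l₁ l₂ →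
      StrictAnti c ∧ (∀ t, c t < twoPairCS a₁ a₂ b₁ b₂ l₁ l₂) ∧
      ¬ Filter.Tendsto c Filter.atTop (nhds (twoPairCL a₁ a₂ b₁ b₂ l₁ l₂))) := by
  set u₁ : ℝ := b₁ * l₁ / a₁ with hu₁def
  set u₂ : ℝ := b₂ * l₂ / a₂ with hu₂def
  have hu₁ : 0 < u₁ := div_pos (mul_pos hb₁ hl₁) ha₁
  have hu₂ : 0 < u₂ := div_pos (mul_pos hb₂ hl₂) ha₂
  -- basic consequences of the square-root condition
  have hsq : u₁ + u₂ + 2 * (Real.sqrt u₁ * Real.sqrt u₂) < 1 := by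
    have h1 : (Real.sqrt u₁ + Real.sqrt u₂) ^ 2 < 1 := by
      nlinarith [hcond, Real.sqrt_nonneg u₁, Real.sqrt_nonneg u₂]
    nlinarith [Real.sq_sqrt hu₁.le, Real.sq_sqrt hu₂.le, h1]
  have hmulsqrt : Real.sqrt (u₁ * u₂) = Real.sqrt u₁ * Real.sqrt u₂ :=
    Real.sqrt_mul hu₁.le u₂
  have hgap : 2 * Real.sqrt (u₁ * u₂) < 1 - u₁ - u₂ := by
    rw [hmulsqrt]; linarith
  have hDval : twoPairD a₁ a₂ b₁ b₂ l₁ l₂ = (1 - u₁ - u₂) ^ 2 - 4 * u₁ * u₂ := by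
    simp only [twoPairD, ← hu₁def, ← hu₂def]
  have hsqmul : Real.sqrt (u₁ * u₂) ^ 2 = u₁ * u₂ :=
    Real.sq_sqrt (mul_nonneg hu₁.le hu₂.le)
  have hDpos : 0 < twoPairD a₁ a₂ b₁ b₂ l₁ l₂ := by
    rw [hDval]
    nlinarith [hgap, Real.sqrt_nonneg (u₁ * u₂), hsqmul]
  set d : ℝ := Real.sqrt (twoPairD a₁ a₂ b₁ b₂ l₁ l₂) with hddef
  have hdpos : 0 < d := Real.sqrt_pos.2 hDpos
  have hd2 : d ^ 2 = (1 - u₁ - u₂) ^ 2 - 4 * u₁ * u₂ := by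
    rw [hddef, Real.sq_sqrt hDpos.le, hDval]
  have hdlt : d < 1 - u₁ - u₂ := by
    have h1 : 0 < 1 - u₁ - u₂ := by
      nlinarith [hgap, Real.sqrt_nonneg (u₁ * u₂)]
    nlinarith [hdpos, hd2, mul_pos hu₁ hu₂]
  set s : ℝ := twoPairCS a₁ a₂ b₁ b₂ l₁ l₂ with hsdef
  set L : ℝ := twoPairCL a₁ a₂ b₁ b₂ l₁ l₂ with hLdef
  have hsval : s = ((1 - u₁ - u₂) - d) / 2 := by
    rw [hsdef, twoPairCS, ← hddef, ← hu₁def, ← hu₂def]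
  have hLval : L = ((1 - u₁ - u₂) + d) / 2 := by
    rw [hLdef, twoPairCL, ← hddef, ← hu₁def, ← hu₂def]
  have H : AuxHyp u₁ u₂ s L := by
    refine ⟨hu₁, hu₂, ?_, ?_, ?_, ?_, ?_⟩
    · rw [hsval]; linarith
    · rw [hsval, hLval]; linarith
    · rw [hLval]; linarith
    · rw [hsval, hLval]; ring
    · rw [hsval, hLval]; linear_combination (1/4 : ℝ) * hd2
  have hGeq : ∀ x : ℝ, twoPairF a₁ a₂ b₁ b₂ l₁ l₂ x = auxG u₁ u₂ x := by
    intro x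
    have e1 : a₁ * x + b₁ * l₁ = a₁ * (x + u₁) := by
      rw [hu₁def]; field_simp
    have e2 : a₂ * x + b₂ * l₂ = a₂ * (x + u₂) := by
      rw [hu₂def]; field_simp
    rw [twoPairF, auxG, e1, e2, mul_div_mul_left x (x + u₁) ha₁.ne',
      mul_div_mul_left x (x + u₂) ha₂.ne', div_mul_div_comm, sq]
  have hrec' : ∀ t, c (t + 1) = auxG u₁ u₂ (c t) := fun t =>
    (hrec t).trans (hGeq _)
  exact ⟨fun h => H.conv c h hrec', fun h => H.div c hc0 h hrec'⟩
end

section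
/- Fix real parameters a₁, a₂ ∈ (0,1], b₁, b₂ ∈ (0,1), λ₁, λ₂ > 0, set u_i = b_iλ_i/a_i, assume √u₁ + √u₂ < 1, and let q₁, q₂ ∈ (0,1]. Let (p_{1,t}, p_{2,t})_{t≥0} be any sequences with p_{1,0}, p_{2,0} > 0 satisfying the coupled recursion p_{1,t+1} = a₁(1 − b₂·min(λ₂/p_{2,t}, q₂)) and p_{2,t+1} = a₂(1 − b₁·min(λ₁/p_{1,t}, q₁)). If q₁ < λ₁/p_{1,S}, then p_{2,t} > p_{2,S} for all t ≥ 1 and p_{1,t} > p_{1,S} for all t ≥ 2. -/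
open Real

set_option maxHeartbeats 1000000 in
/-- Sufficiency direction of the paper's Lemma 2: for the coupled recursion
`p_{1,t+1} = a₁(1 − b₂ min(λ₂/p_{2,t}, q₂))`, `p_{2,t+1} = a₂(1 − b₁ min(λ₁/p_{1,t}, q₁))`,
if `q₁ < λ₁/p_{1,S}` then `p_{2,t} > p_{2,S}` for all `t ≥ 1` and `p_{1,t} > p_{1,S}`
for all `t ≥ 2`, where `p_{i,S} = aᵢ c_S + bᵢ λᵢ`. -/
theorem twoPair_stay_above_repelling (a₁ a₂ b₁ b₂ l₁ l₂ : ℝ)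
    (ha₁ : 0 < a₁) (ha₁' : a₁ ≤ 1) (ha₂ : 0 < a₂) (ha₂' : a₂ ≤ 1)
    (hb₁ : 0 < b₁) (hb₁' : b₁ < 1) (hb₂ : 0 < b₂) (hb₂' : b₂ < 1)
    (hl₁ : 0 < l₁) (hl₂ : 0 < l₂)
    (hcond : Real.sqrt (b₁ * l₁ / a₁) + Real.sqrt (b₂ * l₂ / a₂) < 1)
    (q₁ q₂ : ℝ) (hq₁ : 0 < q₁) (hq₁' : q₁ ≤ 1) (hq₂ : 0 < q₂) (hq₂' : q₂ ≤ 1)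
    (p₁ p₂ : ℕ → ℝ) (hp₁0 : 0 < p₁ 0) (hp₂0 : 0 < p₂ 0)
    (hrec₁ : ∀ t, p₁ (t + 1) = a₁ * (1 - b₂ * min (l₂ / p₂ t) q₂))
    (hrec₂ : ∀ t, p₂ (t + 1) = a₂ * (1 - b₁ * min (l₁ / p₁ t) q₁))
    (hq : q₁ < l₁ / (a₁ * twoPairCS a₁ a₂ b₁ b₂ l₁ l₂ + b₁ * l₁)) :
    (∀ t, 1 ≤ t → a₂ * twoPairCS a₁ a₂ b₁ b₂ l₁ l₂ + b₂ * l₂ < p₂ t) ∧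
    (∀ t, 2 ≤ t → a₁ * twoPairCS a₁ a₂ b₁ b₂ l₁ l₂ + b₁ * l₁ < p₁ t) := by
  set c := twoPairCS a₁ a₂ b₁ b₂ l₁ l₂ with hc_def
  have hu₁ : 0 < b₁ * l₁ / a₁ := div_pos (mul_pos hb₁ hl₁) ha₁
  have hu₂ : 0 < b₂ * l₂ / a₂ := div_pos (mul_pos hb₂ hl₂) ha₂
  set x := Real.sqrt (b₁ * l₁ / a₁) with hx_def
  set y := Real.sqrt (b₂ * l₂ / a₂) with hy_def
  have hx0 : 0 < x := Real.sqrt_pos.mpr hu₁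
  have hy0 : 0 < y := Real.sqrt_pos.mpr hu₂
  have hx2 : x ^ 2 = b₁ * l₁ / a₁ := Real.sq_sqrt hu₁.le
  have hy2 : y ^ 2 = b₂ * l₂ / a₂ := Real.sq_sqrt hu₂.le
  have hD : twoPairD a₁ a₂ b₁ b₂ l₁ l₂ = (1 - x ^ 2 - y ^ 2) ^ 2 - 4 * x ^ 2 * y ^ 2 := by
    rw [twoPairD, hx2, hy2]
  have hs : 2 * (x * y) < 1 - x ^ 2 - y ^ 2 := by nlinarith [hcond, hx0, hy0]
  have hs0 : 0 < 1 - x ^ 2 - y ^ 2 := by nlinarith [mul_pos hx0 hy0]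
  have hDpos : 0 < twoPairD a₁ a₂ b₁ b₂ l₁ l₂ := by
    rw [hD]
    have h1 : 0 < (1 - x ^ 2 - y ^ 2) - 2 * (x * y) := by linarith
    have h2 : 0 < (1 - x ^ 2 - y ^ 2) + 2 * (x * y) := by positivity
    have h3 : ((1 - x ^ 2 - y ^ 2) - 2 * (x * y)) * ((1 - x ^ 2 - y ^ 2) + 2 * (x * y))
        = (1 - x ^ 2 - y ^ 2) ^ 2 - 4 * x ^ 2 * y ^ 2 := by ring
    rw [← h3]
    exact mul_pos h1 h2
  set r := Real.sqrt (twoPairD a₁ a₂ b₁ b₂ l₁ l₂) with hr_def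
  have hr0 : 0 ≤ r := Real.sqrt_nonneg _
  have hr2 : r ^ 2 = (1 - x ^ 2 - y ^ 2) ^ 2 - 4 * x ^ 2 * y ^ 2 := by
    rw [hr_def, Real.sq_sqrt hDpos.le, hD]
  have hrs : r < 1 - x ^ 2 - y ^ 2 := by
    have hlt : twoPairD a₁ a₂ b₁ b₂ l₁ l₂ < (1 - x ^ 2 - y ^ 2) ^ 2 := by
      rw [hD]; nlinarith [mul_pos hx0 hy0]
    calc r < Real.sqrt ((1 - x ^ 2 - y ^ 2) ^ 2) := Real.sqrt_lt_sqrt hDpos.le hlt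
    _ = 1 - x ^ 2 - y ^ 2 := by rw [Real.sqrt_sq hs0.le]
  have hc_eq : c = ((1 - x ^ 2 - y ^ 2) - r) / 2 := by
    rw [hc_def, twoPairCS, hx2, hy2, hr_def]
  have hc0 : 0 < c := by rw [hc_eq]; linarith
  have hp₁S : 0 < a₁ * c + b₁ * l₁ := by positivity
  have hp₂S : 0 < a₂ * c + b₂ * l₂ := by positivity
  -- key quadratic identity
  have hq2 : (a₁ * c + b₁ * l₁) * (a₂ * c + b₂ * l₂) = a₁ * a₂ * c := by
    have h1 : b₁ * l₁ = a₁ * x ^ 2 := by rw [hx2]; field_simp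
    have h2 : b₂ * l₂ = a₂ * y ^ 2 := by rw [hy2]; field_simp
    rw [h1, h2, hc_eq]
    linear_combination (a₁ * a₂ / 4) * hr2
  have hfix₂ : a₂ * (1 - b₁ * (l₁ / (a₁ * c + b₁ * l₁))) = a₂ * c + b₂ * l₂ := by
    field_simp
    linear_combination -hq2
  have hfix₁ : a₁ * (1 - b₂ * (l₂ / (a₂ * c + b₂ * l₂))) = a₁ * c + b₁ * l₁ := by
    field_simp
    linear_combination -hq2
  have key₂ : ∀ t, a₂ * c + b₂ * l₂ < p₂ (t + 1) := by
    intro t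
    rw [hrec₂ t, ← hfix₂]
    have hmin : min (l₁ / p₁ t) q₁ < l₁ / (a₁ * c + b₁ * l₁) :=
      lt_of_le_of_lt (min_le_right _ _) hq
    have h := mul_lt_mul_of_pos_left hmin hb₁
    exact mul_lt_mul_of_pos_left (by linarith) ha₂
  have key₁ : ∀ t, a₁ * c + b₁ * l₁ < p₁ (t + 2) := by
    intro t
    rw [hrec₁ (t + 1), ← hfix₁]
    have h2 : a₂ * c + b₂ * l₂ < p₂ (t + 1) := key₂ t
    have hmin : min (l₂ / p₂ (t + 1)) q₂ < l₂ / (a₂ * c + b₂ * l₂) :=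
      lt_of_le_of_lt (min_le_left _ _) (div_lt_div_of_pos_left hl₂ hp₂S h2)
    have h := mul_lt_mul_of_pos_left hmin hb₂
    exact mul_lt_mul_of_pos_left (by linarith) ha₁
  constructor
  · intro t ht
    obtain ⟨k, rfl⟩ := Nat.exists_eq_add_of_le ht
    simpa [Nat.add_comm] using key₂ k
  · intro t ht
    obtain ⟨k, rfl⟩ := Nat.exists_eq_add_of_le ht
    simpa [Nat.add_comm] using key₁ k
end

section
/- Fix real parameters a₁, a₂ ∈ (0,1], b₁, b₂ ∈ (0,1), λ₁, λ₂ > 0, set u_i = b_iλ_i/a_i and assume √u₁ + √u₂ < 1. Then λ₁ < p_{1,L} if and only if ( (1 − b₁)λ₁/a₁ + b₂λ₂/a₂ < 1 − b₁ ) or ( (2 − b₁)λ₁/a₁ + b₂λ₂/a₂ < 1 ). -/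
open Real

set_option maxHeartbeats 1600000 in
/-- Algebraic core of the paper's Theorem 3 (stability region for two pairs):
`λ₁ < p_{1,L}` iff `(1 − b₁)λ₁/a₁ + b₂λ₂/a₂ < 1 − b₁` or
`(2 − b₁)λ₁/a₁ + b₂λ₂/a₂ < 1`, where `p_{1,L} = a₁ c_L + b₁ λ₁`. -/
theorem twoPair_stability_characterization (a₁ a₂ b₁ b₂ l₁ l₂ : ℝ)
    (ha₁ : 0 < a₁) (ha₁' : a₁ ≤ 1) (ha₂ : 0 < a₂) (ha₂' : a₂ ≤ 1)
    (hb₁ : 0 < b₁) (hb₁' : b₁ < 1) (hb₂ : 0 < b₂) (hb₂' : b₂ < 1)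
    (hl₁ : 0 < l₁) (hl₂ : 0 < l₂)
    (hcond : Real.sqrt (b₁ * l₁ / a₁) + Real.sqrt (b₂ * l₂ / a₂) < 1) :
    l₁ < a₁ * twoPairCL a₁ a₂ b₁ b₂ l₁ l₂ + b₁ * l₁ ↔
      ((1 - b₁) * l₁ / a₁ + b₂ * l₂ / a₂ < 1 - b₁ ∨
        (2 - b₁) * l₁ / a₁ + b₂ * l₂ / a₂ < 1) := by

  have ha₁0 : a₁ ≠ 0 := ne_of_gt ha₁
  simp only [twoPairCL, twoPairD]
  set m := l₁ / a₁ with hm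
  set n := b₂ * l₂ / a₂ with hn
  have hm0 : 0 < m := div_pos hl₁ ha₁
  have hn0 : 0 < n := div_pos (mul_pos hb₂ hl₂) ha₂
  have e1 : b₁ * l₁ / a₁ = b₁ * m := by rw [hm]; ring
  have eA : (1 - b₁) * l₁ / a₁ = (1 - b₁) * m := by rw [hm]; ring
  have eB : (2 - b₁) * l₁ / a₁ = (2 - b₁) * m := by rw [hm]; ring
  rw [e1, eA, eB]
  rw [e1] at hcond
  have hbm0 : 0 < b₁ * m := mul_pos hb₁ hm0
  have hx : Real.sqrt (b₁ * m) ^ 2 = b₁ * m := Real.sq_sqrt hbm0.le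
  have hy : Real.sqrt n ^ 2 = n := Real.sq_sqrt hn0.le
  have hx0 : 0 < Real.sqrt (b₁ * m) := Real.sqrt_pos.2 hbm0
  have hy0 : 0 < Real.sqrt n := Real.sqrt_pos.2 hn0
  have h1 : 0 < 1 - (Real.sqrt (b₁ * m) + Real.sqrt n) ^ 2 := by
    nlinarith [hx0, hy0, hcond]
  have h2 : 0 < 1 - (Real.sqrt (b₁ * m) - Real.sqrt n) ^ 2 := by
    nlinarith [hx0, hy0, hcond]
  have hDpos : 0 < (1 - b₁ * m - n) ^ 2 - 4 * (b₁ * m) * n := by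
    rw [← hx, ← hy]
    nlinarith [mul_pos h1 h2]
  set S := Real.sqrt ((1 - b₁ * m - n) ^ 2 - 4 * (b₁ * m) * n) with hS
  have hS0 : 0 < S := Real.sqrt_pos.2 hDpos
  have hS2 : S ^ 2 = (1 - b₁ * m - n) ^ 2 - 4 * (b₁ * m) * n := Real.sq_sqrt hDpos.le
  have hl : l₁ = m * a₁ := by rw [hm]; field_simp
  clear_value m n S
  rw [hl]
  have hrw : a₁ * ((1 - b₁ * m - n + S) / 2) + b₁ * (m * a₁) =
      m * a₁ + a₁ / 2 * (S - (2 * ((1 - b₁) * m) - (1 - b₁ * m - n))) := by ring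
  rw [hrw, lt_add_iff_pos_right, mul_pos_iff_of_pos_left (by positivity : (0:ℝ) < a₁ / 2),
    sub_pos]
  constructor
  · intro hkey
    by_cases hB : (2 - b₁) * m + n < 1
    · exact Or.inr hB
    · left
      push_neg at hB
      have hge : 0 ≤ 2 * ((1 - b₁) * m) - (1 - b₁ * m - n) := by linarith [hB]
      rw [hS] at hkey
      have h2' : (2 * ((1 - b₁) * m) - (1 - b₁ * m - n)) ^ 2 <
          (1 - b₁ * m - n) ^ 2 - 4 * (b₁ * m) * n := (Real.lt_sqrt hge).1 hkey
      have hfac : 0 < m * ((1 - b₁) * (1 - m) - n) := by nlinarith [h2']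
      have hX : 0 < (1 - b₁) * (1 - m) - n := (mul_pos_iff_of_pos_left hm0).1 hfac
      nlinarith [hX]
  · intro h
    rcases h with hA | hB
    · by_cases hge : 0 ≤ 2 * ((1 - b₁) * m) - (1 - b₁ * m - n)
      · rw [hS]
        refine (Real.lt_sqrt hge).2 ?_
        have hX : 0 < (1 - b₁) * (1 - m) - n := by nlinarith [hA]
        nlinarith [mul_pos hm0 hX]
      · linarith [hS0, not_le.1 hge]
    · linarith [hS0, hB]
end

section
/- Fix real parameters a₁, a₂ ∈ (0,1], b₁, b₂ ∈ (0,1), and λ₂ > 0. On the set of λ₁ > 0 for which √(b₁λ₁/a₁) + √(b₂λ₂/a₂) < 1, the function λ₁ ↦ c_L is strictly decreasing and the function λ₁ ↦ c_S is strictly increasing, where c_L = ((1 − u₁ − u₂) + √D)/2 and c_S = ((1 − u₁ − u₂) − √D)/2 with u_i = b_iλ_i/a_i and D = (1 − u₁ − u₂)² − 4u₁u₂. -/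
open Real

lemma aux_D_nonneg {u w : ℝ} (hu : 0 < u) (hw : 0 < w)
    (h : Real.sqrt u + Real.sqrt w < 1) :
    0 ≤ (1 - u - w) ^ 2 - 4 * u * w ∧ u < 1 ∧ w < 1 := by
  have hs : Real.sqrt u ^ 2 = u := Real.sq_sqrt hu.le
  have ht : Real.sqrt w ^ 2 = w := Real.sq_sqrt hw.le
  have hs0 : 0 ≤ Real.sqrt u := Real.sqrt_nonneg u
  have ht0 : 0 ≤ Real.sqrt w := Real.sqrt_nonneg w
  refine ⟨?_, ?_, ?_⟩
  · have h1 : 0 ≤ 1 - (Real.sqrt u + Real.sqrt w) ^ 2 := by nlinarith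
    have h2 : 0 ≤ 1 - (Real.sqrt u - Real.sqrt w) ^ 2 := by nlinarith
    nlinarith [mul_nonneg h1 h2]
  · nlinarith
  · nlinarith

lemma aux_key {u v w : ℝ} (hu : 0 < u) (hv : 0 < v) (hw : 0 < w) (huv : u < v)
    (hus : Real.sqrt u + Real.sqrt w < 1) (hvs : Real.sqrt v + Real.sqrt w < 1) :
    ((1 - v - w) + Real.sqrt ((1 - v - w) ^ 2 - 4 * v * w)) / 2 <
      ((1 - u - w) + Real.sqrt ((1 - u - w) ^ 2 - 4 * u * w)) / 2 ∧
    ((1 - u - w) - Real.sqrt ((1 - u - w) ^ 2 - 4 * u * w)) / 2 <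
      ((1 - v - w) - Real.sqrt ((1 - v - w) ^ 2 - 4 * v * w)) / 2 := by
  obtain ⟨hDu, hu1, hw1⟩ := aux_D_nonneg hu hw hus
  obtain ⟨hDv, hv1, -⟩ := aux_D_nonneg hv hw hvs
  set Du := (1 - u - w) ^ 2 - 4 * u * w with hDu_def
  set Dv := (1 - v - w) ^ 2 - 4 * v * w with hDv_def
  have sqDu : Real.sqrt Du ^ 2 = Du := Real.sq_sqrt hDu
  have sqDv : Real.sqrt Dv ^ 2 = Dv := Real.sq_sqrt hDv
  have nDu : 0 ≤ Real.sqrt Du := Real.sqrt_nonneg _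
  have nDv : 0 ≤ Real.sqrt Dv := Real.sqrt_nonneg _
  constructor
  · have h1 : Real.sqrt Dv < Real.sqrt Du + (v - u) := by
      rw [Real.sqrt_lt' (by linarith)]
      nlinarith [sq_nonneg (v - u)]
    linarith
  · have hsv : Real.sqrt Dv < 1 - v + w := by
      rw [Real.sqrt_lt' (by linarith)]
      nlinarith
    have h2 : Real.sqrt Dv + (v - u) < Real.sqrt Du := by
      rw [show Real.sqrt Du = Real.sqrt Du from rfl]
      have : (Real.sqrt Dv + (v - u)) ^ 2 < Du := by
        nlinarith [mul_lt_mul_of_pos_left hsv (sub_pos.mpr huv)]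
      calc Real.sqrt Dv + (v - u) = Real.sqrt ((Real.sqrt Dv + (v - u)) ^ 2) := by
            rw [Real.sqrt_sq (by linarith)]
        _ < Real.sqrt Du := Real.sqrt_lt_sqrt (by positivity) this
      -- alternative
    linarith

/-- On the set of `λ₁ > 0` with `√(b₁λ₁/a₁) + √(b₂λ₂/a₂) < 1`, the map `λ₁ ↦ c_L`
is strictly decreasing and the map `λ₁ ↦ c_S` is strictly increasing. -/
theorem twoPair_roots_monotone (a₁ a₂ b₁ b₂ l₂ : ℝ)
    (ha₁ : 0 < a₁) (ha₁' : a₁ ≤ 1) (ha₂ : 0 < a₂) (ha₂' : a₂ ≤ 1)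
    (hb₁ : 0 < b₁) (hb₁' : b₁ < 1) (hb₂ : 0 < b₂) (hb₂' : b₂ < 1)
    (hl₂ : 0 < l₂) :
    StrictAntiOn (fun l₁ => twoPairCL a₁ a₂ b₁ b₂ l₁ l₂)
      {l₁ : ℝ | 0 < l₁ ∧
        Real.sqrt (b₁ * l₁ / a₁) + Real.sqrt (b₂ * l₂ / a₂) < 1} ∧
    StrictMonoOn (fun l₁ => twoPairCS a₁ a₂ b₁ b₂ l₁ l₂)
      {l₁ : ℝ | 0 < l₁ ∧
        Real.sqrt (b₁ * l₁ / a₁) + Real.sqrt (b₂ * l₂ / a₂) < 1} := by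
  have hw : 0 < b₂ * l₂ / a₂ := by positivity
  have main : ∀ x ∈ {l₁ : ℝ | 0 < l₁ ∧
        Real.sqrt (b₁ * l₁ / a₁) + Real.sqrt (b₂ * l₂ / a₂) < 1},
      ∀ y ∈ {l₁ : ℝ | 0 < l₁ ∧
        Real.sqrt (b₁ * l₁ / a₁) + Real.sqrt (b₂ * l₂ / a₂) < 1}, x < y →
      twoPairCL a₁ a₂ b₁ b₂ y l₂ < twoPairCL a₁ a₂ b₁ b₂ x l₂ ∧
      twoPairCS a₁ a₂ b₁ b₂ x l₂ < twoPairCS a₁ a₂ b₁ b₂ y l₂ := by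
    intro x hx y hy hxy
    obtain ⟨hx0, hxs⟩ := hx
    obtain ⟨hy0, hys⟩ := hy
    have hu : 0 < b₁ * x / a₁ := by positivity
    have hv : 0 < b₁ * y / a₁ := by positivity
    have huv : b₁ * x / a₁ < b₁ * y / a₁ := by
      apply div_lt_div_of_pos_right ?_ ha₁
      exact mul_lt_mul_of_pos_left hxy hb₁
    have := aux_key hu hv hw huv hxs hys
    simpa [twoPairCL, twoPairCS, twoPairD] using this
  exact ⟨fun x hx y hy hxy => (main x hx y hy hxy).1,
    fun x hx y hy hxy => (main x hx y hy hxy).2⟩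
end

section
/- Fix an integer K ≥ 2 and reals θ > 0, ρ > 0, λ > 0; set a = Kθ/(θ+1) and C = exp(−θ/ρ). The equation p = C·exp(−aλ/p) has exactly two distinct solutions in (0, ∞) if and only if 0 < λ < (θ+1)/(Kθ)·exp(−1 − θ/ρ). -/
open Real

/-- The symmetric fixed-point map `G(p) = exp(−θ/ρ) · exp(−(Kθ/(θ+1))·λ/p)` for
`K` symmetric transmitter–receiver pairs. -/
noncomputable def symG (K : ℕ) (θ ρ lam p : ℝ) : ℝ :=
  Real.exp (-(θ / ρ)) * Real.exp (-((K : ℝ) * θ / (θ + 1) * lam / p))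

lemma gStrictMonoOn : StrictMonoOn (fun x : ℝ => Real.log x - x) (Set.Ioc 0 1) := by
  intro x hx y hy hxy
  obtain ⟨hx0, _⟩ := hx
  obtain ⟨hy0, hy1⟩ := hy
  have hne : x / y ≠ 1 := by
    intro h
    rw [div_eq_one_iff_eq hy0.ne'] at h
    exact absurd h (ne_of_lt hxy)
  have h1 : Real.log (x / y) < x / y - 1 :=
    Real.log_lt_sub_one_of_pos (by positivity) hne
  rw [Real.log_div hx0.ne' hy0.ne'] at h1
  have h2 : x / y - 1 = (x - y) / y := by field_simp
  have h3 : (x - y) / y ≤ x - y := by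
    rw [div_le_iff₀ hy0]
    nlinarith
  simp only
  linarith [h1, h2 ▸ h1]

lemma gStrictAntiOn : StrictAntiOn (fun x : ℝ => Real.log x - x) (Set.Ici 1) := by
  intro x hx y hy hxy
  have hx1 : (1:ℝ) ≤ x := hx
  have hx0 : (0:ℝ) < x := by linarith
  have hy0 : (0:ℝ) < y := by linarith
  have hne : y / x ≠ 1 := by
    intro h
    rw [div_eq_one_iff_eq hx0.ne'] at h
    exact absurd h (ne_of_gt hxy)
  have h1 : Real.log (y / x) < y / x - 1 :=
    Real.log_lt_sub_one_of_pos (by positivity) hne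
  rw [Real.log_div hy0.ne' hx0.ne'] at h1
  have h3 : (y - x) / x ≤ y - x := by
    rw [div_le_iff₀ hx0]
    nlinarith
  have h2 : y / x - 1 = (y - x) / x := by field_simp
  simp only
  linarith [h2 ▸ h1]

lemma gCont : ContinuousOn (fun x : ℝ => Real.log x - x) {x : ℝ | 0 < x} := by
  apply ContinuousOn.sub
  · exact Real.continuousOn_log.mono (by intro x hx; exact ne_of_gt hx)
  · exact continuousOn_id

lemma core (d : ℝ) :
    (∃ x y : ℝ, 0 < x ∧ 0 < y ∧ x ≠ y ∧
        Real.log x - x = d ∧ Real.log y - y = d ∧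
        ∀ z : ℝ, 0 < z → Real.log z - z = d → z = x ∨ z = y) ↔ d < -1 := by
  constructor
  · rintro ⟨x, y, hx0, hy0, hxy, hgx, hgy, _⟩
    by_contra h
    push_neg at h
    have hle : ∀ z : ℝ, 0 < z → Real.log z - z ≤ -1 := by
      intro z hz
      have := Real.log_le_sub_one_of_pos hz
      linarith
    have hd : d = -1 := le_antisymm (hgx ▸ hle x hx0) h
    have hone : ∀ z : ℝ, 0 < z → Real.log z - z = d → z = 1 := by
      intro z hz hgz
      by_contra hz1
      have := Real.log_lt_sub_one_of_pos hz hz1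
      rw [hd] at hgz
      linarith
    exact hxy ((hone x hx0 hgx).trans (hone y hy0 hgy).symm)
  · intro hd
    set g : ℝ → ℝ := fun x => Real.log x - x with hg
    -- small root in (0, 1]
    have he : Real.exp d ≤ 1 := by
      apply le_of_lt
      rw [← Real.exp_zero]
      exact Real.exp_lt_exp.mpr (by linarith)
    have hcont1 : ContinuousOn g (Set.Icc (Real.exp d) 1) := by
      apply gCont.mono
      intro z hz
      exact lt_of_lt_of_le (Real.exp_pos d) hz.1
    have hmem1 : d ∈ Set.Icc (g (Real.exp d)) (g 1) := by
      constructor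
      · simp only [hg, Real.log_exp]
        linarith [Real.exp_pos d]
      · simp only [hg, Real.log_one]
        linarith
    obtain ⟨x, hxIcc, hgx⟩ := intermediate_value_Icc he hcont1 hmem1
    have hx0 : 0 < x := lt_of_lt_of_le (Real.exp_pos d) hxIcc.1
    have hx1 : x ≤ 1 := hxIcc.2
    -- large root in [1, ∞)
    set t : ℝ := -d with ht
    have ht1 : 1 < t := by simp only [ht]; linarith
    have hexp : 2 * t < Real.exp t := by
      have h2 : t / 2 + 1 < Real.exp (t / 2) := Real.add_one_lt_exp (by positivity)
      have h3 : Real.exp t = Real.exp (t / 2) * Real.exp (t / 2) := by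
        rw [← Real.exp_add]; ring_nf
      have h4 : (t / 2 + 1) * (t / 2 + 1) < Real.exp (t / 2) * Real.exp (t / 2) := by
        nlinarith [Real.exp_pos (t / 2)]
      nlinarith [sq_nonneg (t / 2 - 1)]
    set B : ℝ := Real.exp t with hB
    have hB1 : 1 ≤ B := by
      rw [hB, ← Real.exp_zero]
      exact le_of_lt (Real.exp_lt_exp.mpr (by linarith))
    have hgB : g B < d := by
      simp only [hg, hB, Real.log_exp, ht]
      linarith
    have hcont2 : ContinuousOn g (Set.Icc 1 B) := by
      apply gCont.mono
      intro z hz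
      exact lt_of_lt_of_le one_pos hz.1
    have hmem2 : d ∈ Set.Icc (g B) (g 1) := by
      constructor
      · exact le_of_lt hgB
      · simp only [hg, Real.log_one]; linarith
    obtain ⟨y, hyIcc, hgy⟩ := intermediate_value_Icc' hB1 hcont2 hmem2
    have hy1 : 1 ≤ y := hyIcc.1
    have hy0 : 0 < y := by linarith
    have hyne1 : y ≠ 1 := by
      intro h
      rw [h] at hgy
      simp only [hg, Real.log_one] at hgy
      linarith
    refine ⟨x, y, hx0, hy0, ?_, hgx, hgy, ?_⟩
    · intro h
      apply hyne1
      have : y ≤ 1 := h ▸ hx1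
      linarith
    · intro z hz0 hgz
      rcases le_total z 1 with hz1 | hz1
      · left
        exact gStrictMonoOn.injOn ⟨hz0, hz1⟩ ⟨hx0, hx1⟩ (hgz.trans hgx.symm)
      · right
        exact gStrictAntiOn.injOn hz1 hy1 (hgz.trans hgy.symm)

/-- The equation `p = C·exp(−aλ/p)` (with `a = Kθ/(θ+1)`, `C = exp(−θ/ρ)`) has exactly
two distinct positive solutions iff `λ < (θ+1)/(Kθ)·exp(−1 − θ/ρ)`. -/
theorem sym_two_solutions_iff (K : ℕ) (hK : 2 ≤ K) (θ ρ lam : ℝ)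
    (hθ : 0 < θ) (hρ : 0 < ρ) (hlam : 0 < lam) :
    (∃ p q : ℝ, 0 < p ∧ 0 < q ∧ p ≠ q ∧
        p = symG K θ ρ lam p ∧ q = symG K θ ρ lam q ∧
        ∀ r : ℝ, 0 < r → r = symG K θ ρ lam r → r = p ∨ r = q) ↔
      lam < (θ + 1) / ((K : ℝ) * θ) * Real.exp (-1 - θ / ρ) := by
  simp only [symG]
  have hK0 : (0:ℝ) < (K:ℝ) := by exact_mod_cast Nat.lt_of_lt_of_le (by norm_num) hK
  set b : ℝ := (K : ℝ) * θ / (θ + 1) * lam with hbdef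
  have hb : 0 < b := by positivity
  set d : ℝ := Real.log b + θ / ρ with hddef
  -- fixed-point equivalence
  have hfix : ∀ p : ℝ, 0 < p →
      (p = Real.exp (-(θ / ρ)) * Real.exp (-(b / p)) ↔ Real.log (b / p) - b / p = d) := by
    intro p hp
    rw [← Real.exp_add]
    have hlogdiv : Real.log (b / p) = Real.log b - Real.log p :=
      Real.log_div hb.ne' hp.ne'
    constructor
    · intro h
      have hlp : Real.log p = -(θ / ρ) + -(b / p) := by
        nth_rewrite 1 [h]; rw [Real.log_exp]
      rw [hlogdiv, hddef]
      linarith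
    · intro h
      rw [hlogdiv, hddef] at h
      have : Real.log p = -(θ / ρ) + -(b / p) := by linarith
      rw [← this, Real.exp_log hp]
  -- RHS equivalence
  have hrhs : (lam < (θ + 1) / ((K : ℝ) * θ) * Real.exp (-1 - θ / ρ)) ↔ d < -1 := by
    have h1 : d < -1 ↔ Real.log b < -1 - θ / ρ := by rw [hddef]; constructor <;> intro <;> linarith
    have h2 : Real.log b < -1 - θ / ρ ↔ b < Real.exp (-1 - θ / ρ) :=
      Real.log_lt_iff_lt_exp hb
    have hEq : (θ + 1) / ((K : ℝ) * θ) * Real.exp (-1 - θ / ρ)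
        = Real.exp (-1 - θ / ρ) / ((K : ℝ) * θ / (θ + 1)) := by
      field_simp
    rw [h1, h2, hbdef, hEq, lt_div_iff₀ (show (0:ℝ) < (K:ℝ) * θ / (θ + 1) by positivity)]
    constructor <;> intro h <;> nlinarith [mul_comm lam ((K:ℝ) * θ / (θ + 1))]
  rw [hrhs, ← core d]
  have hinv : ∀ z : ℝ, 0 < z → b / (b / z) = z := by
    intro z hz
    field_simp
  constructor
  · rintro ⟨p, q, hp, hq, hpq, heqp, heqq, huniq⟩
    refine ⟨b / p, b / q, by positivity, by positivity, ?_, (hfix p hp).mp heqp, (hfix q hq).mp heqq, ?_⟩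
    · intro h
      apply hpq
      rw [div_eq_div_iff hp.ne' hq.ne'] at h
      exact (mul_left_cancel₀ hb.ne' h).symm
    · intro z hz hgz
      have hr : 0 < b / z := by positivity
      have : b / z = p ∨ b / z = q := by
        apply huniq _ hr
        apply (hfix _ hr).mpr
        rwa [hinv z hz]
      rcases this with h | h
      · left; rw [← h, hinv z hz]
      · right; rw [← h, hinv z hz]
  · rintro ⟨x, y, hx, hy, hxy, hgx, hgy, huniq⟩
    refine ⟨b / x, b / y, by positivity, by positivity, ?_, ?_, ?_, ?_⟩
    · intro h
      apply hxy
      rw [div_eq_div_iff hx.ne' hy.ne'] at h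
      exact (mul_left_cancel₀ hb.ne' h).symm
    · apply (hfix _ (by positivity)).mpr
      rwa [hinv x hx]
    · apply (hfix _ (by positivity)).mpr
      rwa [hinv y hy]
    · intro r hr heqr
      have : b / r = x ∨ b / r = y := huniq _ (by positivity) ((hfix r hr).mp heqr)
      rcases this with h | h
      · left; rw [← h, hinv r hr]
      · right; rw [← h, hinv r hr]
end

section
/- Fix an integer K ≥ 2 and reals θ > 0, ρ > 0, and λ with 0 < λ < (θ+1)/(Kθ)·exp(−1 − θ/ρ); set a = Kθ/(θ+1) and C = exp(−θ/ρ), and let p_S < p_L be the two solutions in (0, ∞) of p = C·exp(−aλ/p). Then p_S < Kθλ/(θ+1) < p_L. -/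
open Real

private lemma phi_mono (m x y : ℝ) (hx : 0 < x) (hxy : x < y) (hym : y ≤ m) :
    (-(m / x) - Real.log x) < (-(m / y) - Real.log y) := by
  have hy : 0 < y := hx.trans hxy
  have h1 : Real.log y - Real.log x < (y - x) / x := by
    rw [← Real.log_div hy.ne' hx.ne']
    have := Real.log_lt_sub_one_of_pos (div_pos hy hx) (by
      intro h; rw [div_eq_one_iff_eq hx.ne'] at h; linarith)
    have : Real.log (y / x) < y / x - 1 := this
    calc Real.log (y / x) < y / x - 1 := this
      _ = (y - x) / x := by field_simp
  have h2 : (y - x) / x ≤ m / x - m / y := by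
    rw [div_sub_div _ _ hx.ne' hy.ne', div_le_div_iff₀ hx (mul_pos hx hy)]
    nlinarith [mul_nonneg (mul_nonneg (sub_nonneg.2 hxy.le) hx.le) (sub_nonneg.2 hym)]
  linarith

private lemma phi_anti (m x y : ℝ) (hx : 0 < x) (hxy : x < y) (hmx : m ≤ x) :
    (-(m / y) - Real.log y) < (-(m / x) - Real.log x) := by
  have hy : 0 < y := hx.trans hxy
  have h1 : (y - x) / y < Real.log y - Real.log x := by
    rw [← Real.log_div hy.ne' hx.ne']
    have := Real.log_lt_sub_one_of_pos (div_pos hx hy) (by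
      intro h; rw [div_eq_one_iff_eq hy.ne'] at h; linarith)
    have h2 : -Real.log (y / x) < x / y - 1 := by
      rw [← Real.log_inv, inv_div]; exact this
    have : 1 - x / y < Real.log (y / x) := by linarith
    calc (y - x) / y = 1 - x / y := by field_simp
      _ < Real.log (y / x) := this
  have h2 : m / x - m / y ≤ (y - x) / y := by
    rw [div_sub_div _ _ hx.ne' hy.ne', div_le_div_iff₀ (mul_pos hx hy) hy]
    nlinarith [mul_nonneg (mul_nonneg (sub_nonneg.2 hxy.le) hy.le) (sub_nonneg.2 hmx)]
  linarith

/-- The two positive solutions `p_S < p_L` of `p = C·exp(−aλ/p)` straddle `Kθλ/(θ+1)`: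
`p_S < Kθλ/(θ+1) < p_L`. -/
theorem sym_solutions_straddle (K : ℕ) (hK : 2 ≤ K) (θ ρ lam : ℝ)
    (hθ : 0 < θ) (hρ : 0 < ρ) (hlam : 0 < lam)
    (hlam' : lam < (θ + 1) / ((K : ℝ) * θ) * Real.exp (-1 - θ / ρ))
    (pS pL : ℝ) (hpS : 0 < pS) (hpSL : pS < pL)
    (hfixS : pS = symG K θ ρ lam pS) (hfixL : pL = symG K θ ρ lam pL) :
    pS < (K : ℝ) * θ * lam / (θ + 1) ∧ (K : ℝ) * θ * lam / (θ + 1) < pL := by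
  have hK' : (2 : ℝ) ≤ (K : ℝ) := by exact_mod_cast hK
  have hKθ : 0 < (K : ℝ) * θ := by positivity
  have hθ1 : 0 < θ + 1 := by linarith
  set m : ℝ := (K : ℝ) * θ * lam / (θ + 1) with hm
  have hmpos : 0 < m := by positivity
  have hpL : 0 < pL := hpS.trans hpSL
  -- fixed point equations give log p = -(θ/ρ) - m/p
  have key : ∀ p : ℝ, 0 < p → p = symG K θ ρ lam p →
      -(m / p) - Real.log p = θ / ρ := by
    intro p hp hfix
    have : Real.log p = -(θ / ρ) + -((K : ℝ) * θ / (θ + 1) * lam / p) := by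
      have h := congrArg Real.log hfix
      rw [symG, ← Real.exp_add, Real.log_exp] at h
      exact h
    have hrw : (K : ℝ) * θ / (θ + 1) * lam / p = m / p := by
      rw [hm]; ring
    rw [hrw] at this
    linarith
  have hS := key pS hpS hfixS
  have hL := key pL hpL hfixL
  -- φ(m) > θ/ρ
  have hmlt : m < Real.exp (-1 - θ / ρ) := by
    rw [hm, div_lt_iff₀ hθ1]
    calc (K : ℝ) * θ * lam < (K : ℝ) * θ * ((θ + 1) / ((K : ℝ) * θ) * Real.exp (-1 - θ / ρ)) := by
          exact mul_lt_mul_of_pos_left hlam' hKθ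
      _ = Real.exp (-1 - θ / ρ) * (θ + 1) := by field_simp
  have hphim : θ / ρ < -(m / m) - Real.log m := by
    have hlog : Real.log m < -1 - θ / ρ := by
      calc Real.log m < Real.log (Real.exp (-1 - θ / ρ)) :=
            Real.log_lt_log hmpos hmlt
        _ = -1 - θ / ρ := Real.log_exp _
    rw [div_self hmpos.ne']
    linarith
  constructor
  · by_contra h
    push_neg at h  -- m ≤ pS
    rcases eq_or_lt_of_le h with heq | hlt
    · rw [← heq] at hS; linarith
    · have := phi_anti m pS pL hpS hpSL (le_of_lt hlt)
      linarith
  · by_contra h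
    push_neg at h  -- pL ≤ m
    rcases eq_or_lt_of_le h with heq | hlt
    · rw [heq] at hL; linarith
    · have := phi_mono m pS pL hpS hpSL (le_of_lt hlt)
      linarith
end

section
/- Fix an integer K ≥ 2 and reals θ > 0, ρ > 0, and λ with 0 < λ < (θ+1)/(Kθ)·exp(−1 − θ/ρ); set a = Kθ/(θ+1) and C = exp(−θ/ρ), let p_S < p_L be the two solutions in (0, ∞) of p = C·exp(−aλ/p), and define G : (0,∞) → ℝ by G(p) = C·exp(−aλ/p). Let (p_t)_{t≥0} be the sequence defined by any p₀ ∈ (0,∞) and p_{t+1} = G(p_t). If p₀ > p_S, then p_t converges to p_L as t → ∞. If 0 < p₀ < p_S, then (p_t) is strictly decreasing and satisfies p_t < p_S for all t. -/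
open Real

lemma phi_mono_aux (c : ℝ) {x y : ℝ} (hx : 0 < x) (hxy : x < y) (hy : y ≤ c) :
    Real.log y - Real.log x < c / x - c / y := by
  have hy0 : 0 < y := hx.trans hxy
  have h1 : Real.log (y / x) < y / x - 1 :=
    Real.log_lt_sub_one_of_pos (by positivity) (by
      intro h
      have : y = x := by field_simp at h; linarith
      linarith)
  rw [Real.log_div hy0.ne' hx.ne'] at h1
  have h2 : y / x - 1 ≤ c / x - c / y := by
    rw [div_sub_div _ _ hx.ne' hy0.ne', div_sub_one hx.ne',
      div_le_div_iff₀ hx (mul_pos hx hy0)]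
    nlinarith [mul_nonneg (mul_nonneg hx.le (sub_nonneg.2 hxy.le)) (sub_nonneg.2 hy)]
  linarith

lemma phi_anti_aux (c : ℝ) {x y : ℝ} (hx : 0 < x) (hxy : x < y) (hcx : c ≤ x) :
    c / x - c / y < Real.log y - Real.log x := by
  have hy0 : 0 < y := hx.trans hxy
  have h1 : Real.log (x / y) < x / y - 1 :=
    Real.log_lt_sub_one_of_pos (by positivity) (by
      intro h
      have : x = y := by field_simp at h; linarith
      linarith)
  rw [Real.log_div hx.ne' hy0.ne'] at h1
  have h2 : c / x - c / y ≤ 1 - x / y := by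
    rw [div_sub_div _ _ hx.ne' hy0.ne', sub_div' hy0.ne',
      div_le_div_iff₀ (mul_pos hx hy0) hy0]
    nlinarith [mul_nonneg (mul_nonneg hy0.le (sub_nonneg.2 hxy.le)) (sub_nonneg.2 hcx)]
  linarith


/-- Convergence dichotomy for the symmetric iteration `p_{t+1} = G(p_t)`:
if `p₀ > p_S` the iterates converge to the larger fixed point `p_L`;
if `0 < p₀ < p_S` the iterates are strictly decreasing and stay below `p_S`. -/
theorem sym_iteration_dichotomy (K : ℕ) (hK : 2 ≤ K) (θ ρ lam : ℝ)
    (hθ : 0 < θ) (hρ : 0 < ρ) (hlam : 0 < lam)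
    (hlam' : lam < (θ + 1) / ((K : ℝ) * θ) * Real.exp (-1 - θ / ρ))
    (pS pL : ℝ) (hpS : 0 < pS) (hpSL : pS < pL)
    (hfixS : pS = symG K θ ρ lam pS) (hfixL : pL = symG K θ ρ lam pL)
    (p : ℕ → ℝ) (hp0 : 0 < p 0)
    (hrec : ∀ t, p (t + 1) = symG K θ ρ lam (p t)) :
    (pS < p 0 → Filter.Tendsto p Filter.atTop (nhds pL)) ∧
    (p 0 < pS → StrictAnti p ∧ ∀ t, p t < pS) := by
  have hpL : 0 < pL := hpS.trans hpSL
  have hK0 : (0 : ℝ) < (K : ℝ) := by positivity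
  set b : ℝ := (K : ℝ) * θ / (θ + 1) * lam with hbdef
  have hb : 0 < b := by
    have : (0:ℝ) < (K : ℝ) * θ / (θ + 1) := by positivity
    exact mul_pos this hlam
  have hG : ∀ q : ℝ, symG K θ ρ lam q = Real.exp (-(θ / ρ) - b / q) := by
    intro q
    rw [symG, ← Real.exp_add, sub_eq_add_neg]
  -- log of fixed points
  have hlogS : Real.log pS = -(θ / ρ) - b / pS := by
    conv_lhs => rw [hfixS, hG, Real.log_exp]
  have hlogL : Real.log pL = -(θ / ρ) - b / pL := by
    conv_lhs => rw [hfixL, hG, Real.log_exp]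
  -- pS < b < pL
  have hSb : pS < b := by
    by_contra h
    push_neg at h  -- b ≤ pS
    have := phi_anti_aux b hpS hpSL h
    linarith
  have hbL : b < pL := by
    by_contra h
    push_neg at h  -- pL ≤ b
    have := phi_mono_aux b hpS hpSL h
    linarith
  -- sign lemmas
  have hsign1 : ∀ q, 0 < q → q < pS → symG K θ ρ lam q < q := by
    intro q hq hqS
    have h := phi_mono_aux b hq hqS hSb.le
    rw [hG]
    calc Real.exp (-(θ / ρ) - b / q) < Real.exp (Real.log q) :=
          Real.exp_lt_exp.2 (by linarith)
      _ = q := Real.exp_log hq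
  have hsign2 : ∀ q, pS < q → q < pL → q < symG K θ ρ lam q := by
    intro q hSq hqL
    have hq : 0 < q := hpS.trans hSq
    have key : Real.log q < -(θ / ρ) - b / q := by
      rcases le_or_gt q b with h | h
      · have := phi_mono_aux b hpS hSq h
        linarith
      · have := phi_anti_aux b hq hqL h.le
        linarith
    calc q = Real.exp (Real.log q) := (Real.exp_log hq).symm
      _ < Real.exp (-(θ / ρ) - b / q) := Real.exp_lt_exp.2 key
      _ = symG K θ ρ lam q := (hG q).symm
  have hsign3 : ∀ q, pL < q → symG K θ ρ lam q < q := by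
    intro q hLq
    have hq : 0 < q := hpL.trans hLq
    have := phi_anti_aux b hpL hLq hbL.le
    rw [hG]
    calc Real.exp (-(θ / ρ) - b / q) < Real.exp (Real.log q) :=
          Real.exp_lt_exp.2 (by linarith)
      _ = q := Real.exp_log hq
  have hGpos : ∀ q : ℝ, 0 < symG K θ ρ lam q := by
    intro q; rw [hG]; exact Real.exp_pos _
  have hGmono : ∀ x y : ℝ, 0 < x → x < y → symG K θ ρ lam x < symG K θ ρ lam y := by
    intro x y hx hxy
    rw [hG, hG]
    apply Real.exp_lt_exp.2
    have : b / y < b / x := div_lt_div_of_pos_left hb hx hxy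
    linarith
  -- continuity of G at any positive point
  have hGcont : ∀ L : ℝ, 0 < L → ContinuousAt (symG K θ ρ lam) L := by
    intro L hL
    have : ContinuousAt (fun q : ℝ =>
        Real.exp (-(θ / ρ)) * Real.exp (-((K : ℝ) * θ / (θ + 1) * lam / q))) L := by
      apply ContinuousAt.mul continuousAt_const
      exact Real.continuous_exp.continuousAt.comp
        ((continuousAt_const.div continuousAt_id hL.ne').neg)
    exact this
  constructor
  · -- case pS < p 0
    intro hP0
    rcases lt_trichotomy (p 0) pL with hlt | heq | hgt
    · -- pS < p0 < pL : increasing towards pL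
      have hbound : ∀ t, pS < p t ∧ p t < pL := by
        intro t
        induction t with
        | zero => exact ⟨hP0, hlt⟩
        | succ t ih =>
          rcases ih with ⟨h1, h2⟩
          have hpt : 0 < p t := hpS.trans h1
          constructor
          · rw [hrec]
            calc pS < p t := h1
              _ < symG K θ ρ lam (p t) := hsign2 _ h1 h2
          · rw [hrec]
            calc symG K θ ρ lam (p t) < symG K θ ρ lam pL := hGmono _ _ hpt h2
              _ = pL := hfixL.symm
      have hmono : Monotone p := monotone_nat_of_le_succ (by
        intro t
        rw [hrec]
        exact (hsign2 _ (hbound t).1 (hbound t).2).le)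
      have hbdd : BddAbove (Set.range p) := by
        refine ⟨pL, ?_⟩
        rintro x ⟨t, rfl⟩
        exact (hbound t).2.le
      have htend : Filter.Tendsto p Filter.atTop (nhds (⨆ t, p t)) :=
        tendsto_atTop_ciSup hmono hbdd
      set L := ⨆ t, p t with hLdef
      have hLle : L ≤ pL := ciSup_le fun t => (hbound t).2.le
      have hSL : pS < L := lt_of_lt_of_le (hbound 0).1 (le_ciSup hbdd 0)
      have hL0 : 0 < L := hpS.trans hSL
      have h2 : Filter.Tendsto (fun t => p (t + 1)) Filter.atTop (nhds L) :=
        htend.comp (Filter.tendsto_add_atTop_nat 1)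
      have h3 : Filter.Tendsto (fun t => p (t + 1)) Filter.atTop
          (nhds (symG K θ ρ lam L)) := by
        simp only [hrec]
        exact ((hGcont L hL0).tendsto).comp htend
      have hfix : symG K θ ρ lam L = L := tendsto_nhds_unique h3 h2
      have hLeq : L = pL := by
        rcases hLle.lt_or_eq with h | h
        · exact absurd hfix (ne_of_gt (hsign2 _ hSL h))
        · exact h
      rwa [hLeq] at htend
    · -- p 0 = pL : constant sequence
      have hconst : ∀ t, p t = pL := by
        intro t
        induction t with
        | zero => exact heq
        | succ t ih => rw [hrec, ih, ← hfixL]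
      have : p = fun _ => pL := funext hconst
      rw [this]
      exact tendsto_const_nhds
    · -- pL < p 0 : decreasing towards pL
      have hbound : ∀ t, pL < p t := by
        intro t
        induction t with
        | zero => exact hgt
        | succ t ih =>
          rw [hrec]
          calc pL = symG K θ ρ lam pL := hfixL
            _ < symG K θ ρ lam (p t) := hGmono _ _ hpL ih
      have hanti : Antitone p := antitone_nat_of_succ_le (by
        intro t
        rw [hrec]
        exact (hsign3 _ (hbound t)).le)
      have hbdd : BddBelow (Set.range p) := by
        refine ⟨pL, ?_⟩
        rintro x ⟨t, rfl⟩
        exact (hbound t).le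
      have htend : Filter.Tendsto p Filter.atTop (nhds (⨅ t, p t)) :=
        tendsto_atTop_ciInf hanti hbdd
      set L := ⨅ t, p t with hLdef
      have hLge : pL ≤ L := le_ciInf fun t => (hbound t).le
      have hL0 : 0 < L := hpL.trans_le hLge
      have h2 : Filter.Tendsto (fun t => p (t + 1)) Filter.atTop (nhds L) :=
        htend.comp (Filter.tendsto_add_atTop_nat 1)
      have h3 : Filter.Tendsto (fun t => p (t + 1)) Filter.atTop
          (nhds (symG K θ ρ lam L)) := by
        simp only [hrec]
        exact ((hGcont L hL0).tendsto).comp htend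
      have hfix : symG K θ ρ lam L = L := tendsto_nhds_unique h3 h2
      have hLeq : L = pL := by
        rcases hLge.lt_or_eq with h | h
        · exact absurd hfix (ne_of_lt (hsign3 _ h))
        · exact h.symm
      rwa [hLeq] at htend
  · -- case p 0 < pS
    intro hP0
    have hbound : ∀ t, 0 < p t ∧ p t < pS := by
      intro t
      induction t with
      | zero => exact ⟨hp0, hP0⟩
      | succ t ih =>
        rcases ih with ⟨h1, h2⟩
        refine ⟨by rw [hrec]; exact hGpos _, ?_⟩
        rw [hrec]
        calc symG K θ ρ lam (p t) < symG K θ ρ lam pS := hGmono _ _ h1 h2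
          _ = pS := hfixS.symm
    refine ⟨strictAnti_nat_of_succ_lt ?_, fun t => (hbound t).2⟩
    intro t
    rw [hrec]
    exact hsign1 _ (hbound t).1 (hbound t).2
end

section
/- Fix an integer K ≥ 2 and reals θ > 0, ρ > 0, and λ with 0 < λ < (θ+1)/(Kθ)·exp(−1 − θ/ρ); set a = Kθ/(θ+1) and C = exp(−θ/ρ), and let p_S < p_L be the two solutions in (0, ∞) of p = C·exp(−aλ/p). Let q ∈ (0,1] and let (p_t)_{t≥0} be any sequence with p₀ > 0 satisfying p_{t+1} = C·exp(−a·min(λ/p_t, q)). If q < λ/p_S, then p_t > p_S for all t ≥ 1. -/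
open Real

/-- Sufficiency direction of the paper's Lemma 3: for the recursion
`p_{t+1} = C·exp(−a·min(λ/p_t, q))` with `q < λ/p_S`, all iterates from `t ≥ 1`
stay strictly above the repelling fixed point `p_S`. -/
theorem sym_stay_above_repelling (K : ℕ) (hK : 2 ≤ K) (θ ρ lam : ℝ)
    (hθ : 0 < θ) (hρ : 0 < ρ) (hlam : 0 < lam)
    (hlam' : lam < (θ + 1) / ((K : ℝ) * θ) * Real.exp (-1 - θ / ρ))
    (pS pL : ℝ) (hpS : 0 < pS) (hpSL : pS < pL)
    (hfixS : pS = symG K θ ρ lam pS) (hfixL : pL = symG K θ ρ lam pL)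
    (q : ℝ) (hq : 0 < q) (hq' : q ≤ 1) (hqS : q < lam / pS)
    (p : ℕ → ℝ) (hp0 : 0 < p 0)
    (hrec : ∀ t, p (t + 1) =
      Real.exp (-(θ / ρ)) *
        Real.exp (-((K : ℝ) * θ / (θ + 1) * min (lam / p t) q))) :
    ∀ t, 1 ≤ t → pS < p t := by
  intro t ht
  obtain ⟨s, rfl⟩ : ∃ s, t = s + 1 := ⟨t - 1, (Nat.succ_pred_eq_of_pos ht).symm⟩
  rw [hrec]
  have ha : 0 < (K : ℝ) * θ / (θ + 1) := by
    have hK' : (0:ℝ) < (K : ℝ) := by positivity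
    positivity
  have hmin : min (lam / p s) q < lam / pS := lt_of_le_of_lt (min_le_right _ _) hqS
  have hexp : Real.exp (-((K : ℝ) * θ / (θ + 1) * lam / pS))
      < Real.exp (-((K : ℝ) * θ / (θ + 1) * min (lam / p s) q)) := by
    apply Real.exp_lt_exp.2
    have : (K : ℝ) * θ / (θ + 1) * min (lam / p s) q < (K : ℝ) * θ / (θ + 1) * (lam / pS) :=
      (mul_lt_mul_iff_right₀ ha).2 hmin
    rw [mul_div_assoc]; linarith
  calc pS = Real.exp (-(θ / ρ)) * Real.exp (-((K : ℝ) * θ / (θ + 1) * lam / pS)) := hfixS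
    _ < _ := by
        apply mul_lt_mul_of_pos_left hexp (Real.exp_pos _)
end

section
/- Fix an integer K ≥ 2 and reals θ > 0 and ρ > 0 with θ·(K−1) ≥ 1. Then for every λ with 0 < λ < (θ+1)/(Kθ)·exp(−1 − θ/ρ), the larger solution p_L of the equation p = exp(−θ/ρ)·exp(−Kθλ/((θ+1)p)) in (0, ∞) satisfies λ < p_L. -/
open Real

/-- One case of the paper's Theorem 4: for `K` symmetric pairs with `θ(K−1) ≥ 1`, every
input rate `λ` in `(0, (θ+1)/(Kθ)·exp(−1 − θ/ρ))` satisfies `λ < p_L`, where `p_L` is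
the larger positive solution of `p = exp(−θ/ρ)·exp(−Kθλ/((θ+1)p))`. -/
theorem sym_stability_large_theta (K : ℕ) (hK : 2 ≤ K) (θ ρ : ℝ)
    (hθ : 0 < θ) (hρ : 0 < ρ) (hθK : 1 ≤ θ * ((K : ℝ) - 1))
    (lam : ℝ) (hlam : 0 < lam)
    (hlam' : lam < (θ + 1) / ((K : ℝ) * θ) * Real.exp (-1 - θ / ρ))
    (pL : ℝ) (hpL : 0 < pL) (hfixL : pL = symG K θ ρ lam pL)
    (hmax : ∀ p : ℝ, 0 < p → p = symG K θ ρ lam p → p ≤ pL) :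
    lam < pL := by
  set a : ℝ := (K : ℝ) * θ / (θ + 1) with ha_def
  set C : ℝ := Real.exp (-(θ / ρ)) with hC_def
  have hK1 : (1 : ℝ) ≤ (K : ℝ) - 1 := by
    have : (2 : ℝ) ≤ (K : ℝ) := by exact_mod_cast hK
    linarith
  have hθ1 : 0 < θ + 1 := by linarith
  have hKθ : 0 < (K : ℝ) * θ := by nlinarith
  have ha1 : 1 ≤ a := by
    rw [ha_def, le_div_iff₀ hθ1]
    nlinarith
  have ha0 : 0 < a := lt_of_lt_of_le one_pos ha1
  have hC0 : 0 < C := Real.exp_pos _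
  -- key bound : a * lam < C * exp (-1)
  have hkey : a * lam < C * Real.exp (-1) := by
    have h1 : a * lam < a * ((θ + 1) / ((K : ℝ) * θ) * Real.exp (-1 - θ / ρ)) :=
      (mul_lt_mul_iff_right₀ ha0).mpr hlam'
    have h2 : a * ((θ + 1) / ((K : ℝ) * θ)) = 1 := by
      field_simp [ha_def]
      rw [ha_def]; field_simp
    have h3 : Real.exp (-1 - θ / ρ) = C * Real.exp (-1) := by
      rw [hC_def, ← Real.exp_add]; ring_nf
    calc a * lam < a * ((θ + 1) / ((K : ℝ) * θ) * Real.exp (-1 - θ / ρ)) := h1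
      _ = a * ((θ + 1) / ((K : ℝ) * θ)) * Real.exp (-1 - θ / ρ) := by ring
      _ = Real.exp (-1 - θ / ρ) := by rw [h2, one_mul]
      _ = C * Real.exp (-1) := h3
  set p₀ : ℝ := a * lam with hp₀_def
  have hp₀0 : 0 < p₀ := mul_pos ha0 hlam
  have hlam_p₀ : lam ≤ p₀ := by nlinarith
  -- G(p₀) = C * exp(-1)
  have hGp₀ : symG K θ ρ lam p₀ = C * Real.exp (-1) := by
    unfold symG
    rw [← hC_def, ← ha_def]
    congr 2
    rw [div_self (ne_of_gt hp₀0)]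
  -- p₀ < C
  have hp₀C : p₀ < C := by
    have : Real.exp (-1) < 1 := Real.exp_lt_one_iff.mpr (by norm_num)
    nlinarith
  -- G(C) < C
  have hGC : symG K θ ρ lam C < C := by
    unfold symG
    rw [← hC_def]
    have : Real.exp (-(a * lam / C)) < 1 := by
      apply Real.exp_lt_one_iff.mpr
      have : 0 < a * lam / C := div_pos (mul_pos ha0 hlam) hC0
      linarith
    nlinarith
  -- continuity of h p = symG ... p - p on Icc p₀ C
  have hcont : ContinuousOn (fun p => symG K θ ρ lam p - p) (Set.Icc p₀ C) := by
    apply ContinuousOn.sub _ continuousOn_id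
    unfold symG
    apply ContinuousOn.mul continuousOn_const
    apply Real.continuous_exp.comp_continuousOn
    apply ContinuousOn.neg
    apply ContinuousOn.div continuousOn_const continuousOn_id
    intro x hx
    exact ne_of_gt (lt_of_lt_of_le hp₀0 hx.1)
  -- IVT
  have hmem : (0 : ℝ) ∈ Set.Icc ((fun p => symG K θ ρ lam p - p) C)
      ((fun p => symG K θ ρ lam p - p) p₀) := by
    constructor
    · simp only; linarith
    · simp only [hGp₀]; linarith
  obtain ⟨x, hxmem, hx0⟩ := intermediate_value_Icc' (le_of_lt hp₀C) hcont hmem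
  have hxfix : x = symG K θ ρ lam x := by
    simp only at hx0; linarith
  have hx0' : 0 < x := lt_of_lt_of_le hp₀0 hxmem.1
  have hxle : x ≤ pL := hmax x hx0' hxfix
  have hxne : p₀ ≠ x := by
    intro h
    have : symG K θ ρ lam p₀ = p₀ := by rw [h]; exact hxfix.symm
    rw [hGp₀] at this
    linarith
  have : p₀ < x := lt_of_le_of_ne hxmem.1 hxne
  linarith
end

section
/- Fix an integer K ≥ 2 and reals θ > 0 and ρ > 0 with θ·(K−1) < 1, and let λ satisfy 0 < λ < (θ+1)/(Kθ)·exp(−1 − θ/ρ). Let p_L be the larger solution in (0, ∞) of p = exp(−θ/ρ)·exp(−Kθλ/((θ+1)p)). Then λ < p_L if and only if λ < exp(−Kθ/(θ+1) − θ/ρ). -/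
open Real

/-- Strict monotonicity of `x ↦ x·exp(c/x)` on `[c, ∞)` (for `c > 0`). -/
lemma mul_exp_div_strictMono {c x y : ℝ} (hc : 0 < c) (hcx : c ≤ x) (hxy : x < y) :
    x * Real.exp (c / x) < y * Real.exp (c / y) := by
  have hx : 0 < x := lt_of_lt_of_le hc hcx
  have hy : 0 < y := hx.trans hxy
  have hlog : Real.log (x / y) < x / y - 1 :=
    Real.log_lt_sub_one_of_pos (div_pos hx hy) (by
      intro h
      have : x = y := by field_simp at h; linarith
      linarith)
  rw [Real.log_div hx.ne' hy.ne'] at hlog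
  have key : Real.log x + c / x < Real.log y + c / y := by
    have h1 : c / x - c / y = c * (y - x) / (x * y) := by field_simp
    have h2 : c * (y - x) ≤ x * (y - x) :=
      mul_le_mul_of_nonneg_right hcx (by linarith)
    have h3 : c * (y - x) / (x * y) ≤ x * (y - x) / (x * y) := by
      gcongr
    have h4 : x * (y - x) / (x * y) = 1 - x / y := by field_simp
    linarith
  calc x * Real.exp (c / x) = Real.exp (Real.log x + c / x) := by
        rw [Real.exp_add, Real.exp_log hx]
    _ < Real.exp (Real.log y + c / y) := Real.exp_lt_exp.mpr key
    _ = y * Real.exp (c / y) := by rw [Real.exp_add, Real.exp_log hy]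

/-- The other case of the paper's Theorem 4: for `K` symmetric pairs with `θ(K−1) < 1`
and `λ` in `(0, (θ+1)/(Kθ)·exp(−1 − θ/ρ))`, one has `λ < p_L` iff
`λ < exp(−Kθ/(θ+1) − θ/ρ)`, where `p_L` is the larger positive solution of
`p = exp(−θ/ρ)·exp(−Kθλ/((θ+1)p))`. -/
theorem sym_stability_small_theta (K : ℕ) (hK : 2 ≤ K) (θ ρ : ℝ)
    (hθ : 0 < θ) (hρ : 0 < ρ) (hθK : θ * ((K : ℝ) - 1) < 1)
    (lam : ℝ) (hlam : 0 < lam)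
    (hlam' : lam < (θ + 1) / ((K : ℝ) * θ) * Real.exp (-1 - θ / ρ))
    (pL : ℝ) (hpL : 0 < pL) (hfixL : pL = symG K θ ρ lam pL)
    (hmax : ∀ p : ℝ, 0 < p → p = symG K θ ρ lam p → p ≤ pL) :
    lam < pL ↔ lam < Real.exp (-((K : ℝ) * θ / (θ + 1)) - θ / ρ) := by
  set a : ℝ := (K : ℝ) * θ / (θ + 1) with ha_def
  set C : ℝ := Real.exp (-(θ / ρ)) with hC_def
  have hθ1 : (0 : ℝ) < θ + 1 := by linarith
  have hK2 : (2 : ℝ) ≤ (K : ℝ) := by exact_mod_cast hK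
  have hKθ : (K : ℝ) * θ < θ + 1 := by nlinarith
  have ha : 0 < a := div_pos (by nlinarith) hθ1
  have ha1 : a < 1 := (div_lt_one hθ1).mpr hKθ
  have hC : 0 < C := Real.exp_pos _
  have hRHS : Real.exp (-a - θ / ρ) = C * Real.exp (-a) := by
    rw [hC_def, ← Real.exp_add]; ring_nf
  have halam : a * lam < lam := by nlinarith
  constructor
  · -- λ < p_L → λ < C e^{-a}
    intro h1
    by_contra hge
    push_neg at hge
    rw [hRHS] at hge
    -- p_L * exp(a*lam/p_L) = C
    have hfix' : pL * Real.exp (a * lam / pL) = C := by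
      nth_rewrite 1 [hfixL]
      unfold symG
      rw [← ha_def, ← hC_def, mul_assoc, ← Real.exp_add]
      simp
    have hmono := mul_exp_div_strictMono (c := a * lam) (x := lam) (y := pL)
      (mul_pos ha hlam) halam.le h1
    have hll : a * lam / lam = a := by field_simp
    rw [hll, hfix'] at hmono
    have : C ≤ lam * Real.exp a := by
      calc C = C * Real.exp (-a) * Real.exp a := by
            rw [mul_assoc, ← Real.exp_add]; simp
        _ ≤ lam * Real.exp a := by
            exact mul_le_mul_of_nonneg_right hge (Real.exp_pos _).le
    linarith
  · -- λ < C e^{-a} → λ < p_L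
    intro h2
    rw [hRHS] at h2
    have hea1 : Real.exp (-a) < 1 := Real.exp_lt_one_iff.mpr (by linarith)
    have hlC : lam < C := h2.trans_le (by nlinarith [Real.exp_pos (-a)])
    -- IVT for f p = symG p - p on [lam, C]
    set f : ℝ → ℝ := fun p => symG K θ ρ lam p - p with hf_def
    have hcont : ContinuousOn f (Set.Icc lam C) := by
      apply ContinuousOn.sub _ continuousOn_id
      apply ContinuousOn.mul continuousOn_const
      apply Real.continuous_exp.comp_continuousOn
      apply ContinuousOn.neg
      apply ContinuousOn.div continuousOn_const continuousOn_id
      intro p hp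
      have : 0 < p := lt_of_lt_of_le hlam hp.1
      exact this.ne'
    have hflam : 0 < f lam := by
      have : symG K θ ρ lam lam = C * Real.exp (-a) := by
        unfold symG
        rw [← ha_def, ← hC_def]
        congr 2
        field_simp
      simp only [hf_def, this]
      linarith
    have hfC : f C < 0 := by
      have hlt : Real.exp (-(a * lam / C)) < 1 := by
        apply Real.exp_lt_one_iff.mpr
        have : 0 < a * lam / C := div_pos (mul_pos ha hlam) hC
        linarith
      have hlt2 := mul_lt_mul_of_pos_left hlt hC
      have : symG K θ ρ lam C < C := by
        unfold symG
        rw [← ha_def, ← hC_def]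
        linarith
      simp only [hf_def]
      linarith
    have hmem : (0 : ℝ) ∈ Set.Icc (f C) (f lam) := ⟨hfC.le, hflam.le⟩
    obtain ⟨p, hpmem, hfp⟩ := intermediate_value_Icc' hlC.le hcont hmem
    have hppos : 0 < p := lt_of_lt_of_le hlam hpmem.1
    have hpfix : p = symG K θ ρ lam p := by
      simp only [hf_def] at hfp
      linarith [sub_eq_zero.mp hfp]
    have hlp : lam < p := by
      rcases lt_or_eq_of_le hpmem.1 with h | h
      · exact h
      · exfalso
        rw [← h] at hfp
        rw [hfp] at hflam
        exact lt_irrefl _ hflam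
    exact hlp.trans_le (hmax p hppos hpfix)
end
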